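/- arXiv:1501.00263 — 8 statements merged into one kernel-verified Lean document; each statement's English description precedes it below -/
import Mathlib

section
/- Let ℓ(w) = (1/N) Σ_{i=1}^N φ(y_i w^T x_i) + (γ/2)‖w‖² with γ > 0, ‖x_i‖₂ ≤ B, y_i ∈ {-1,1}, and φ: ℝ → ℝ convex and three times differentiable. If there exist Q > 0 and α ∈ [0,1) such that |φ'''(t)| ≤ Q (φ''(t))^{1-α} for all t ∈ ℝ, then ℓ is self-concordant with parameter B^{1+2α} Q / γ^{1/2+α}. -/
open scoped RealInnerProductSpace

lemma sc_deriv_nonneg {g : ℝ → ℝ} (hg : Monotone g) (t : ℝ) : 0 ≤ deriv g t := by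
  by_cases hd : DifferentiableAt ℝ g t
  · have h := hd.hasDerivAt
    rw [hasDerivAt_iff_tendsto_slope] at h
    have h' : Filter.Tendsto (slope g t) (nhdsWithin t (Set.Ioi t)) (nhds (deriv g t)) :=
      h.mono_left (nhdsWithin_mono t fun z hz => by
        simp only [Set.mem_compl_iff, Set.mem_singleton_iff]
        exact ne_of_gt hz)
    refine ge_of_tendsto h' ?_
    filter_upwards [self_mem_nhdsWithin] with z hz
    have h1 : g t ≤ g z := hg (le_of_lt hz)
    have h2 : (0:ℝ) < z - t := sub_pos.2 hz
    rw [slope_def_field]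
    exact div_nonneg (by linarith) (by linarith)
  · rw [deriv_zero_of_not_differentiableAt hd]

lemma sc_comp_linear {E : Type*} [NormedAddCommGroup E] [NormedSpace ℝ E]
    (g : ℝ → ℝ) {n : ℕ} (hg : ContDiff ℝ n g) (L : E →L[ℝ] ℝ) (w u : E) :
    iteratedFDeriv ℝ n (fun v => g (L v)) w (fun _ => u)
      = (L u) ^ n * iteratedDeriv n g (L w) := by
  rw [show (fun v => g (L v)) = g ∘ L from rfl,
    L.iteratedFDeriv_comp_right hg w le_rfl,
    ContinuousMultilinearMap.compContinuousLinearMap_apply,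
    iteratedFDeriv_apply_eq_iteratedDeriv_mul_prod]
  simp [smul_eq_mul]

lemma sc_sum_apply {ι : Type*} [Fintype ι] {E : Type*} [NormedAddCommGroup E]
    [NormedSpace ℝ E] {n : ℕ} (f : ι → E → ℝ) (h : ∀ i, ContDiff ℝ n (f i)) (w : E)
    (m : Fin n → E) :
    iteratedFDeriv ℝ n (fun v => ∑ i, f i v) w m = ∑ i, iteratedFDeriv ℝ n (f i) w m := by
  rw [iteratedFDeriv_sum fun j _ => h j]
  simp

lemma sc_analytic {N : ℕ} (hN : 0 < N) (a c e : Fin N → ℝ) (B γ Q α U : ℝ)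
    (hγ : 0 < γ) (hQ : 0 < Q) (hα0 : 0 ≤ α) (hα1 : α < 1) (hB0 : 0 ≤ B) (hU : 0 ≤ U)
    (hc : ∀ i, 0 ≤ c i) (ha : ∀ i, |a i| ≤ B * U)
    (h3 : ∀ i, |e i| ≤ Q * c i ^ (1 - α)) :
    |(1/(N:ℝ)) * ∑ i, a i ^ 3 * e i|
      ≤ B ^ (1 + 2 * α) * Q / γ ^ ((1:ℝ)/2 + α) *
        ((1/(N:ℝ)) * ∑ i, a i ^ 2 * c i + γ * U ^ 2) ^ ((3:ℝ)/2) := by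
  have hNR : (0:ℝ) < (N:ℝ) := by exact_mod_cast hN
  have h1α : (0:ℝ) < 1 - α := by linarith
  have hBU : (0:ℝ) ≤ B * U := mul_nonneg hB0 hU
  set z : Fin N → ℝ := fun i => c i * a i ^ 2 with hzdef
  have hz0 : ∀ i, 0 ≤ z i := fun i => mul_nonneg (hc i) (sq_nonneg _)
  set S : ℝ := (1/(N:ℝ)) * ∑ i, a i ^ 2 * c i with hSdef
  have hSz : S = ∑ i, (1/(N:ℝ)) * z i := by
    rw [hSdef, Finset.mul_sum]
    exact Finset.sum_congr rfl fun i _ => by rw [hzdef]; ring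
  have hS0 : 0 ≤ S := by
    rw [hSz]; exact Finset.sum_nonneg fun i _ => mul_nonneg (by positivity) (hz0 i)
  set T : ℝ := S + γ * U ^ 2 with hTdef
  have hT0 : 0 ≤ T := by rw [hTdef]; positivity
  have hST : S ≤ T := by rw [hTdef]; nlinarith [sq_nonneg U]
  have hpt : ∀ i, |a i ^ 3 * e i| ≤ Q * ((B*U) ^ (1 + 2*α) * z i ^ (1 - α)) := by
    intro i
    have habs : |a i ^ 3 * e i| = |a i| ^ 3 * |e i| := by rw [abs_mul, abs_pow]
    rw [habs]
    have step1 : |a i| ^ 3 * |e i| ≤ |a i| ^ 3 * (Q * c i ^ (1 - α)) :=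
      mul_le_mul_of_nonneg_left (h3 i) (by positivity)
    refine step1.trans ?_
    have e1 : z i ^ (1 - α) = c i ^ (1-α) * (|a i| ^ ((2:ℕ):ℝ)) ^ (1 - α) := by
      rw [hzdef]
      rw [Real.mul_rpow (hc i) (sq_nonneg _)]
      rw [Real.rpow_natCast, sq_abs]
    have e2 : (|a i| ^ ((2:ℕ):ℝ)) ^ (1 - α) = |a i| ^ (((2:ℕ):ℝ) * (1 - α)) :=
      (Real.rpow_mul (abs_nonneg _) _ _).symm
    have e3 : |a i| ^ (((2:ℕ):ℝ) * (1-α)) * |a i| ^ (1 + 2*α) = |a i| ^ (((3:ℕ)):ℝ) := by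
      rw [← Real.rpow_add' (abs_nonneg _) (by push_cast; intro hcon; nlinarith)]
      congr 1
      push_cast; ring
    have key : |a i| ^ (3:ℕ) * c i ^ (1 - α) = z i ^ (1 - α) * |a i| ^ (1 + 2*α) := by
      calc |a i| ^ (3:ℕ) * c i ^ (1-α)
          = c i ^ (1-α) * |a i| ^ (((3:ℕ)):ℝ) := by rw [Real.rpow_natCast]; ring
        _ = c i ^ (1-α) * (|a i| ^ (((2:ℕ):ℝ)*(1-α)) * |a i| ^ (1 + 2*α)) := by rw [e3]
        _ = z i ^ (1-α) * |a i| ^ (1 + 2*α) := by rw [e1, e2]; ring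
    have hre : |a i| ^ (3:ℕ) * (Q * c i ^ (1-α)) = Q * (z i ^ (1-α) * |a i| ^ (1 + 2*α)) := by
      rw [show |a i| ^ (3:ℕ) * (Q * c i ^ (1-α)) = Q * (|a i| ^ (3:ℕ) * c i ^ (1-α)) from by
        ring, key]
    rw [hre]
    have h5 : z i ^ (1-α) * |a i| ^ (1 + 2*α) ≤ z i ^ (1-α) * (B*U) ^ (1 + 2*α) :=
      mul_le_mul_of_nonneg_left
        (Real.rpow_le_rpow (abs_nonneg _) (ha i) (by linarith)) (Real.rpow_nonneg (hz0 i) _)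
    calc Q * (z i ^ (1-α) * |a i| ^ (1 + 2*α))
        ≤ Q * (z i ^ (1-α) * (B*U) ^ (1 + 2*α)) := mul_le_mul_of_nonneg_left h5 hQ.le
      _ = Q * ((B*U) ^ (1 + 2*α) * z i ^ (1-α)) := by ring
  have hw' : ∑ _i : Fin N, (1/(N:ℝ)) = 1 := by
    rw [Finset.sum_const, Finset.card_univ, Fintype.card_fin, nsmul_eq_mul]
    field_simp
  have hp : (1:ℝ) ≤ 1/(1-α) := by rw [le_div_iff₀ h1α]; linarith
  have jensen : ∑ i, (1/(N:ℝ)) * z i ^ (1-α) ≤ S ^ (1-α) := by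
    have h := Real.arith_mean_le_rpow_mean Finset.univ (fun _ => 1/(N:ℝ))
      (fun i => z i ^ (1-α)) (fun i _ => by positivity) hw'
      (fun i _ => Real.rpow_nonneg (hz0 i) _) hp
    have hzz : ∀ i : Fin N, ((z i ^ (1-α)) ^ ((1:ℝ)/(1-α))) = z i := by
      intro i
      rw [← Real.rpow_mul (hz0 i), mul_one_div_cancel (ne_of_gt h1α), Real.rpow_one]
    rw [one_div_one_div] at h
    simp only [hzz] at h
    rw [hSz]
    exact h
  have hmain : |(1/(N:ℝ)) * ∑ i, a i ^ 3 * e i| ≤ Q * (B*U) ^ (1 + 2*α) * S ^ (1-α) := by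
    calc |(1/(N:ℝ)) * ∑ i, a i ^ 3 * e i| = (1/(N:ℝ)) * |∑ i, a i ^ 3 * e i| := by
          rw [abs_mul, abs_of_pos (by positivity : (0:ℝ) < 1/(N:ℝ))]
      _ ≤ (1/(N:ℝ)) * ∑ i, |a i ^ 3 * e i| :=
          mul_le_mul_of_nonneg_left (Finset.abs_sum_le_sum_abs _ _) (by positivity)
      _ ≤ (1/(N:ℝ)) * ∑ i, Q * ((B*U) ^ (1 + 2*α) * z i ^ (1-α)) :=
          mul_le_mul_of_nonneg_left (Finset.sum_le_sum fun i _ => hpt i) (by positivity)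
      _ = Q * (B*U) ^ (1 + 2*α) * ∑ i, (1/(N:ℝ)) * z i ^ (1-α) := by
          rw [Finset.mul_sum, Finset.mul_sum]
          exact Finset.sum_congr rfl fun i _ => by ring
      _ ≤ Q * (B*U) ^ (1 + 2*α) * S ^ (1-α) :=
          mul_le_mul_of_nonneg_left jensen (by positivity)
  refine hmain.trans ?_
  have hsplit : (B*U) ^ (1 + 2*α) = B ^ (1 + 2*α) * U ^ (1 + 2*α) := Real.mul_rpow hB0 hU
  have hU2T : U ^ ((1:ℝ) + 2*α) ≤ (T/γ) ^ ((1:ℝ)/2 + α) := by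
    have h1 : U ^ ((1:ℝ) + 2*α) = (U ^ ((2:ℕ):ℝ)) ^ ((1:ℝ)/2 + α) := by
      rw [← Real.rpow_mul hU]
      congr 1
      push_cast; ring
    have h2 : U ^ ((2:ℕ):ℝ) ≤ T/γ := by
      rw [Real.rpow_natCast, le_div_iff₀ hγ]
      rw [hTdef]
      nlinarith [hS0]
    rw [h1]
    exact Real.rpow_le_rpow (Real.rpow_nonneg hU _) h2 (by linarith)
  have hdiv : (T/γ) ^ ((1:ℝ)/2 + α) = T ^ ((1:ℝ)/2 + α) / γ ^ ((1:ℝ)/2 + α) :=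
    Real.div_rpow hT0 hγ.le (_)
  have hS1α : S ^ (1-α) ≤ T ^ (1-α) := Real.rpow_le_rpow hS0 hST h1α.le
  have hTT : T ^ ((1:ℝ)/2 + α) * T ^ (1-α) = T ^ ((3:ℝ)/2) := by
    rw [← Real.rpow_add' hT0 (by intro hcon; nlinarith)]
    congr 1
    ring
  have hγq : (0:ℝ) < γ ^ ((1:ℝ)/2 + α) := Real.rpow_pos_of_pos hγ _
  calc Q * (B*U) ^ (1 + 2*α) * S ^ (1-α)
      = B ^ (1 + 2*α) * Q * (U ^ ((1:ℝ) + 2*α) * S ^ (1-α)) := by rw [hsplit]; ring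
    _ ≤ B ^ (1 + 2*α) * Q *
        ((T ^ ((1:ℝ)/2 + α) / γ ^ ((1:ℝ)/2 + α)) * T ^ (1-α)) := by
        refine mul_le_mul_of_nonneg_left ?_ (by positivity)
        exact mul_le_mul (hU2T.trans_eq hdiv) hS1α (Real.rpow_nonneg hS0 _) (by positivity)
    _ = B ^ (1 + 2*α) * Q / γ ^ ((1:ℝ)/2 + α) * T ^ ((3:ℝ)/2) := by
        rw [← hTT]
        field_simp

/-- If `|φ'''(t)| ≤ Q (φ''(t))^{1-α}` for all `t`, with `Q > 0`, `α ∈ [0,1)`,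
`γ > 0`, `‖x_i‖ ≤ B`, `y_i ∈ {±1}`, then the regularized empirical loss
`ℓ(w) = (1/N) Σ φ(y_i ⟨w, x_i⟩) + (γ/2)‖w‖²` is self-concordant with
parameter `B^{1+2α} Q / γ^{1/2+α}`. -/
theorem regularized_loss_self_concordant {d N : ℕ} (hN : 0 < N)
    (x : Fin N → EuclideanSpace ℝ (Fin d)) (y : Fin N → ℝ) (B γ Q α : ℝ)
    (hy : ∀ i, y i = 1 ∨ y i = -1) (hB : ∀ i, ‖x i‖ ≤ B)
    (hγ : 0 < γ) (hQ : 0 < Q) (hα : α ∈ Set.Ico (0:ℝ) 1)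
    (φ : ℝ → ℝ) (hφ : ContDiff ℝ 3 φ) (hφconv : ConvexOn ℝ Set.univ φ)
    (hφ3 : ∀ t : ℝ, |deriv (deriv (deriv φ)) t| ≤ Q * (deriv (deriv φ) t) ^ (1 - α)) :
    ∀ w u : EuclideanSpace ℝ (Fin d),
      |iteratedFDeriv ℝ 3
          (fun v => (1 / (N:ℝ)) * ∑ i, φ (y i * ⟪v, x i⟫) + (γ / 2) * ‖v‖ ^ 2)
          w (fun _ => u)|
        ≤ (B ^ (1 + 2 * α) * Q / γ ^ ((1:ℝ)/2 + α)) *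
          (iteratedFDeriv ℝ 2
            (fun v => (1 / (N:ℝ)) * ∑ i, φ (y i * ⟪v, x i⟫) + (γ / 2) * ‖v‖ ^ 2)
            w (fun _ => u)) ^ ((3:ℝ)/2) := by
  obtain ⟨hα0, hα1⟩ := hα
  have hB0 : 0 ≤ B := le_trans (norm_nonneg (x ⟨0, hN⟩)) (hB ⟨0, hN⟩)
  have hmono : Monotone (deriv φ) := by
    have hdiff : ∀ t : ℝ, DifferentiableAt ℝ φ t := fun t =>
      (hφ.differentiable (by norm_num)).differentiableAt
    exact monotoneOn_univ.mp (hφconv.monotoneOn_deriv fun t _ => hdiff t)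
  have hcnn : ∀ t : ℝ, 0 ≤ deriv (deriv φ) t := fun t => sc_deriv_nonneg hmono t
  intro w u
  set L : Fin N → EuclideanSpace ℝ (Fin d) →L[ℝ] ℝ :=
    fun i => y i • innerSL ℝ (x i) with hLdef
  have hLapp : ∀ i (v : EuclideanSpace ℝ (Fin d)), L i v = y i * ⟪v, x i⟫ := by
    intro i v
    simp only [hLdef, ContinuousLinearMap.smul_apply, innerSL_apply_apply, smul_eq_mul]
    rw [real_inner_comm]
  set P : Fin d → EuclideanSpace ℝ (Fin d) →L[ℝ] ℝ :=
    fun j => EuclideanSpace.proj j with hPdef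
  have hPapp : ∀ j (v : EuclideanSpace ℝ (Fin d)), P j v = v j := fun j v => rfl
  have hnormsq : ∀ v : EuclideanSpace ℝ (Fin d), ‖v‖^2 = ∑ j, (P j v)^2 := by
    intro v
    rw [EuclideanSpace.norm_eq, Real.sq_sqrt (by positivity)]
    exact Finset.sum_congr rfl fun j _ => by rw [hPapp, Real.norm_eq_abs, sq_abs]
  have hstep : (fun v : EuclideanSpace ℝ (Fin d) =>
      (1 / (N:ℝ)) * ∑ i, φ (y i * ⟪v, x i⟫) + (γ / 2) * ‖v‖ ^ 2)
      = fun v => (1/(N:ℝ)) • (∑ i, φ (L i v)) + (γ/2) • (∑ j, (P j v)^2) := by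
    funext v
    rw [smul_eq_mul, smul_eq_mul, ← hnormsq]
    have : ∑ i, φ (L i v) = ∑ i, φ (y i * ⟪v, x i⟫) :=
      Finset.sum_congr rfl fun i _ => by rw [hLapp]
    rw [this]
  have hD : ∀ n : ℕ, (n : WithTop ℕ∞) ≤ 3 →
      iteratedFDeriv ℝ n (fun v : EuclideanSpace ℝ (Fin d) =>
        (1 / (N:ℝ)) * ∑ i, φ (y i * ⟪v, x i⟫) + (γ / 2) * ‖v‖ ^ 2) w (fun _ => u)
      = (1/(N:ℝ)) * ∑ i, ((L i u) ^ n * iteratedDeriv n φ (L i w))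
        + (γ/2) * ∑ j, ((P j u) ^ n * iteratedDeriv n (fun t : ℝ => t^2) (P j w)) := by
    intro n hn
    have hφn : ContDiff ℝ n φ := hφ.of_le hn
    have hf1 : ∀ i : Fin N, ContDiff ℝ n fun v : EuclideanSpace ℝ (Fin d) => φ (L i v) :=
      fun i => hφn.comp (L i).contDiff
    have hf2 : ∀ j : Fin d, ContDiff ℝ n fun v : EuclideanSpace ℝ (Fin d) => (P j v)^2 :=
      fun j => (P j).contDiff.pow 2
    have hsum1 : ContDiff ℝ n fun v : EuclideanSpace ℝ (Fin d) => ∑ i, φ (L i v) :=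
      ContDiff.sum fun i _ => hf1 i
    have hsum2 : ContDiff ℝ n fun v : EuclideanSpace ℝ (Fin d) => ∑ j, (P j v)^2 :=
      ContDiff.sum fun j _ => hf2 j
    rw [hstep, iteratedFDeriv_add_apply' (hsum1.const_smul _).contDiffAt (hsum2.const_smul _).contDiffAt,
      ContinuousMultilinearMap.add_apply,
      iteratedFDeriv_const_smul_apply' hsum1.contDiffAt, iteratedFDeriv_const_smul_apply' hsum2.contDiffAt,
      ContinuousMultilinearMap.smul_apply, ContinuousMultilinearMap.smul_apply,
      sc_sum_apply _ hf1, sc_sum_apply _ hf2, smul_eq_mul, smul_eq_mul]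
    congr 1
    · congr 1
      exact Finset.sum_congr rfl fun i _ => sc_comp_linear φ hφn (L i) w u
    · congr 1
      exact Finset.sum_congr rfl fun j _ =>
        sc_comp_linear (fun t : ℝ => t^2) (contDiff_id.pow 2) (P j) w u
  have hsq1 : deriv (fun t:ℝ => t^2) = fun t => 2*t := by
    funext t; rw [deriv_pow_field]; norm_num
  have hsq2 : deriv (fun t:ℝ => 2*t) = fun _ => (2:ℝ) := by
    funext t; rw [deriv_const_mul _ differentiableAt_fun_id, deriv_id'', mul_one]
  have hit2 : iteratedDeriv 2 (fun t:ℝ => t^2) = fun _ => (2:ℝ) := by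
    rw [show (2:ℕ) = 0+1+1 from rfl, iteratedDeriv_succ, iteratedDeriv_succ,
      iteratedDeriv_zero, hsq1, hsq2]
  have hit3 : iteratedDeriv 3 (fun t:ℝ => t^2) = fun _ => (0:ℝ) := by
    rw [show (3:ℕ) = 0+1+1+1 from rfl, iteratedDeriv_succ, iteratedDeriv_succ,
      iteratedDeriv_succ, iteratedDeriv_zero, hsq1, hsq2]
    funext t; simp
  have hφ3d : iteratedDeriv 3 φ = deriv (deriv (deriv φ)) := by
    rw [show (3:ℕ) = 0+1+1+1 from rfl, iteratedDeriv_succ, iteratedDeriv_succ,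
      iteratedDeriv_succ, iteratedDeriv_zero]
  have hφ2d : iteratedDeriv 2 φ = deriv (deriv φ) := by
    rw [show (2:ℕ) = 0+1+1 from rfl, iteratedDeriv_succ, iteratedDeriv_succ,
      iteratedDeriv_zero]
  rw [hD 3 (by norm_num), hD 2 (by norm_num), hφ3d, hφ2d, hit2, hit3]
  have hq3 : (γ/2) * ∑ j : Fin d, ((P j u) ^ 3 * (fun _ : ℝ => (0:ℝ)) (P j w)) = 0 := by
    simp
  have hq2 : (γ/2) * ∑ j : Fin d, ((P j u) ^ 2 * (fun _ : ℝ => (2:ℝ)) (P j w))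
      = γ * ‖u‖^2 := by
    simp only
    rw [← Finset.sum_mul, ← hnormsq u]
    ring
  rw [hq3, add_zero, hq2]
  have ha : ∀ i, |L i u| ≤ B * ‖u‖ := by
    intro i
    rw [hLapp, abs_mul]
    have hy1 : |y i| = 1 := by rcases hy i with h | h <;> simp [h]
    rw [hy1, one_mul]
    calc |⟪u, x i⟫| ≤ ‖u‖ * ‖x i‖ := abs_real_inner_le_norm u (x i)
      _ ≤ ‖u‖ * B := mul_le_mul_of_nonneg_left (hB i) (norm_nonneg u)
      _ = B * ‖u‖ := mul_comm _ _
  exact sc_analytic hN (fun i => L i u) (fun i => deriv (deriv φ) (L i w))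
    (fun i => deriv (deriv (deriv φ)) (L i w)) B γ Q α (‖u‖) hγ hQ hα0 hα1 hB0
    (norm_nonneg u) (fun i => hcnn _) ha (fun i => hφ3 _)
end

section
/- The regularized logistic regression objective ℓ(w) = (1/N) Σ_{i=1}^N log(1 + exp(-y_i w^T x_i)) + (γ/2)‖w‖₂², with γ > 0, y_i ∈ {-1,1}, and ‖x_i‖₂ ≤ B for all i, is self-concordant with parameter B/√γ. -/
open scoped RealInnerProductSpace

noncomputable def phi0 (s : ℝ) : ℝ := Real.log (1 + Real.exp s)
noncomputable def phi1 (s : ℝ) : ℝ := Real.exp s / (1 + Real.exp s)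
noncomputable def phi2 (s : ℝ) : ℝ := Real.exp s / (1 + Real.exp s) ^ 2
noncomputable def phi3 (s : ℝ) : ℝ := Real.exp s * (1 - Real.exp s) / (1 + Real.exp s) ^ 3

lemma one_add_exp_pos (s : ℝ) : 0 < 1 + Real.exp s := by positivity

lemma hasDerivAt_phi0 (s : ℝ) : HasDerivAt phi0 (phi1 s) s := by
  have h : HasDerivAt (fun s => 1 + Real.exp s) (Real.exp s) s :=
    (Real.hasDerivAt_exp s).const_add 1
  show HasDerivAt (fun s => Real.log (1 + Real.exp s)) (phi1 s) s
  simpa [phi0, phi1] using h.log (ne_of_gt (one_add_exp_pos s))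

lemma hasDerivAt_phi1 (s : ℝ) : HasDerivAt phi1 (phi2 s) s := by
  have h : HasDerivAt (fun s => 1 + Real.exp s) (Real.exp s) s :=
    (Real.hasDerivAt_exp s).const_add 1
  have := (Real.hasDerivAt_exp s).div h (ne_of_gt (one_add_exp_pos s))
  refine this.congr_deriv ?_
  have h0 := ne_of_gt (one_add_exp_pos s)
  unfold phi2
  field_simp
  ring

lemma hasDerivAt_phi2 (s : ℝ) : HasDerivAt phi2 (phi3 s) s := by
  have h : HasDerivAt (fun s => (1 + Real.exp s) ^ 2) (2 * (1 + Real.exp s) ^ 1 * Real.exp s) s :=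
    ((Real.hasDerivAt_exp s).const_add 1).pow 2
  have := (Real.hasDerivAt_exp s).div h (by positivity)
  refine this.congr_deriv ?_
  have h0 := ne_of_gt (one_add_exp_pos s)
  unfold phi3
  field_simp
  ring

lemma phi2_nonneg (s : ℝ) : 0 ≤ phi2 s := by unfold phi2; positivity

lemma abs_phi3_le (s : ℝ) : |phi3 s| ≤ phi2 s := by
  have h0 := one_add_exp_pos s
  have he := Real.exp_pos s
  rw [phi3, phi2, abs_div, abs_mul, abs_of_pos he, abs_of_pos (by positivity : (0:ℝ) < (1 + Real.exp s) ^ 3)]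
  rw [div_le_div_iff₀ (by positivity) (by positivity)]
  have h1 : |1 - Real.exp s| ≤ 1 + Real.exp s := by
    rw [abs_le]; constructor <;> nlinarith
  calc Real.exp s * |1 - Real.exp s| * (1 + Real.exp s) ^ 2
      ≤ Real.exp s * (1 + Real.exp s) * (1 + Real.exp s) ^ 2 := by
        have he' := he.le; gcongr
    _ = Real.exp s * (1 + Real.exp s) ^ 3 := by ring

lemma contDiff_phi0 : ContDiff ℝ ⊤ phi0 :=
  (contDiff_const.add Real.contDiff_exp).log fun s => ne_of_gt (one_add_exp_pos s)

section line
variable {E : Type*} [NormedAddCommGroup E] [NormedSpace ℝ E]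

lemma iteratedFDeriv_shift {f : E → ℝ} (hf : ContDiff ℝ ⊤ f) (w : E) (n : ℕ) (z : E) :
    iteratedFDeriv ℝ n (fun v => f (w + v)) z = iteratedFDeriv ℝ n f (w + z) := by
  induction n generalizing z with
  | zero => ext m; simp
  | succ n ih =>
    ext m
    rw [iteratedFDeriv_succ_apply_left, iteratedFDeriv_succ_apply_left]
    have hdiff : Differentiable ℝ (iteratedFDeriv ℝ n f) :=
      hf.differentiable_iteratedFDeriv (by norm_num)
    have e : (fun z => iteratedFDeriv ℝ n (fun v => f (w + v)) z)
        = fun z => iteratedFDeriv ℝ n f (w + z) := funext ih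
    have hF : HasFDerivAt (fun z => iteratedFDeriv ℝ n f (w + z))
        (fderiv ℝ (iteratedFDeriv ℝ n f) (w + z)) z := by
      have h1 : HasFDerivAt (fun z : E => w + z) (ContinuousLinearMap.id ℝ E) z :=
        (hasFDerivAt_id z).const_add w
      exact ((hdiff (w + z)).hasFDerivAt.comp z h1).congr_fderiv (by simp)
    rw [show iteratedFDeriv ℝ n (fun v => f (w + v)) = fun z => iteratedFDeriv ℝ n f (w + z) from e,
      hF.fderiv]
end line

section line2
variable {E : Type*} [NormedAddCommGroup E] [NormedSpace ℝ E]

lemma iteratedFDeriv_line {f : E → ℝ} (hf : ContDiff ℝ ⊤ f) (w u : E) (n : ℕ) :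
    iteratedFDeriv ℝ n f w (fun _ => u) = iteratedDeriv n (fun t : ℝ => f (w + t • u)) 0 := by
  set L : ℝ →L[ℝ] E := (ContinuousLinearMap.id ℝ ℝ).smulRight u with hL
  have hfs : ContDiff ℝ ⊤ (fun v => f (w + v)) := hf.comp (contDiff_const.add contDiff_id)
  have hcomp : (fun t : ℝ => f (w + t • u)) = (fun v => f (w + v)) ∘ L := by
    funext t; simp [hL]
  rw [hcomp, iteratedDeriv_eq_iteratedFDeriv,
    L.iteratedFDeriv_comp_right hfs 0 le_top,
    ContinuousMultilinearMap.compContinuousLinearMap_apply,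
    iteratedFDeriv_shift hf w n]
  simp [hL]
end line2

/-- The regularized logistic regression objective
`ℓ(w) = (1/N) Σ log(1 + exp(-y_i ⟨w, x_i⟩)) + (γ/2)‖w‖²`, with `γ > 0`,
`y_i ∈ {±1}` and `‖x_i‖ ≤ B`, is self-concordant with parameter `B/√γ`. -/
theorem logistic_regression_self_concordant {d N : ℕ} (hN : 0 < N)
    (x : Fin N → EuclideanSpace ℝ (Fin d)) (y : Fin N → ℝ) (B γ : ℝ)
    (hy : ∀ i, y i = 1 ∨ y i = -1) (hB : ∀ i, ‖x i‖ ≤ B) (hγ : 0 < γ) :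
    ∀ w u : EuclideanSpace ℝ (Fin d),
      |iteratedFDeriv ℝ 3
          (fun v => (1 / (N:ℝ)) * ∑ i, Real.log (1 + Real.exp (-(y i * ⟪v, x i⟫)))
            + (γ / 2) * ‖v‖ ^ 2) w (fun _ => u)|
        ≤ (B / Real.sqrt γ) *
          (iteratedFDeriv ℝ 2
            (fun v => (1 / (N:ℝ)) * ∑ i, Real.log (1 + Real.exp (-(y i * ⟪v, x i⟫)))
              + (γ / 2) * ‖v‖ ^ 2) w (fun _ => u)) ^ ((3:ℝ)/2) := by
  intro w u
  set F : EuclideanSpace ℝ (Fin d) → ℝ := fun v =>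
      (1 / (N:ℝ)) * ∑ i, Real.log (1 + Real.exp (-(y i * ⟪v, x i⟫))) + (γ / 2) * ‖v‖ ^ 2
    with hFdef
  -- smoothness
  have hF : ContDiff ℝ ⊤ F := by
    rw [hFdef]
    apply ContDiff.add
    · refine contDiff_const.mul (ContDiff.sum fun i _ => ?_)
      have hg : ContDiff ℝ ⊤ (fun v : EuclideanSpace ℝ (Fin d) => -(y i * ⟪v, x i⟫)) :=
        (contDiff_const.mul ((contDiff_id).inner ℝ contDiff_const)).neg
      exact contDiff_phi0.comp hg
    · exact contDiff_const.mul (contDiff_norm_sq ℝ)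
  set b : Fin N → ℝ := fun i => -(y i * ⟪w, x i⟫) with hbdef
  set m : Fin N → ℝ := fun i => -(y i * ⟪u, x i⟫) with hmdef
  set g0 : ℝ → ℝ := fun t => (1 / (N:ℝ)) * ∑ i, phi0 (b i + t * m i)
      + (γ/2) * (‖w‖^2 + 2*t*⟪w,u⟫ + t^2*‖u‖^2) with hg0def
  set g1 : ℝ → ℝ := fun t => (1 / (N:ℝ)) * ∑ i, m i * phi1 (b i + t * m i)
      + (γ/2) * (2*⟪w,u⟫ + 2*t*‖u‖^2) with hg1def
  set g2 : ℝ → ℝ := fun t => (1 / (N:ℝ)) * ∑ i, (m i)^2 * phi2 (b i + t * m i)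
      + γ * ‖u‖^2 with hg2def
  set g3 : ℝ → ℝ := fun t => (1 / (N:ℝ)) * ∑ i, (m i)^3 * phi3 (b i + t * m i) with hg3def
  have hline : (fun t : ℝ => F (w + t • u)) = g0 := by
    funext t
    simp only [hFdef, hg0def]
    have key : ∀ i : Fin N, -(y i * ⟪w + t • u, x i⟫) = b i + t * m i := by
      intro i
      rw [inner_add_left, real_inner_smul_left]
      simp only [hbdef, hmdef]
      ring
    simp only [key, phi0]
    rw [norm_add_sq_real, real_inner_smul_right, norm_smul]
    simp only [mul_pow, sq_abs, Real.norm_eq_abs]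
    ring
  -- derivative chain
  have hd0 : ∀ t, HasDerivAt g0 (g1 t) t := by
    intro t
    have hsum : ∀ i ∈ Finset.univ, HasDerivAt (fun t : ℝ => phi0 (b i + t * m i))
        (m i * phi1 (b i + t * m i)) t := by
      intro i _
      have hl : HasDerivAt (fun t : ℝ => b i + t * m i) (m i) t := by
        simpa using (hasDerivAt_mul_const (m i)).const_add (b i)
      exact ((hasDerivAt_phi0 (b i + t * m i)).comp t hl).congr_deriv (mul_comm _ _)
    have hS := HasDerivAt.fun_sum hsum
    have h1 : HasDerivAt (fun t : ℝ => 2*t*⟪w,u⟫) (2*⟪w,u⟫) t := by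
      simpa using ((hasDerivAt_id t).const_mul 2).mul_const (⟪w,u⟫)
    have h2 : HasDerivAt (fun t : ℝ => t^2*‖u‖^2) (2*t*‖u‖^2) t := by
      simpa [mul_comm] using (hasDerivAt_pow 2 t).mul_const (‖u‖^2)
    have hpoly : HasDerivAt (fun t : ℝ => ‖w‖^2 + 2*t*⟪w,u⟫ + t^2*‖u‖^2)
        (2*⟪w,u⟫ + 2*t*‖u‖^2) t := by
      simpa using ((hasDerivAt_const t (‖w‖^2)).fun_add h1).fun_add h2
    simp only [hg0def, hg1def]
    exact (hS.const_mul (1/(N:ℝ))).fun_add (hpoly.const_mul (γ/2))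
  have hd1 : ∀ t, HasDerivAt g1 (g2 t) t := by
    intro t
    have hsum : ∀ i ∈ Finset.univ, HasDerivAt (fun t : ℝ => m i * phi1 (b i + t * m i))
        ((m i)^2 * phi2 (b i + t * m i)) t := by
      intro i _
      have hl : HasDerivAt (fun t : ℝ => b i + t * m i) (m i) t := by
        simpa using (hasDerivAt_mul_const (m i)).const_add (b i)
      have := ((hasDerivAt_phi1 (b i + t * m i)).comp t hl).const_mul (m i)
      exact this.congr_deriv (by ring)
    have hS := HasDerivAt.fun_sum hsum
    have hpoly : HasDerivAt (fun t : ℝ => 2*⟪w,u⟫ + 2*t*‖u‖^2) (2*‖u‖^2) t := by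
      have h1 : HasDerivAt (fun t : ℝ => 2*t*‖u‖^2) (2*‖u‖^2) t := by
        simpa using ((hasDerivAt_id t).const_mul 2).mul_const (‖u‖^2)
      simpa using (hasDerivAt_const t (2*⟪w,u⟫)).fun_add h1
    simp only [hg1def, hg2def]
    have := (hS.const_mul (1/(N:ℝ))).fun_add (hpoly.const_mul (γ/2))
    exact this.congr_deriv (by ring)
  have hd2 : ∀ t, HasDerivAt g2 (g3 t) t := by
    intro t
    have hsum : ∀ i ∈ Finset.univ, HasDerivAt (fun t : ℝ => (m i)^2 * phi2 (b i + t * m i))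
        ((m i)^3 * phi3 (b i + t * m i)) t := by
      intro i _
      have hl : HasDerivAt (fun t : ℝ => b i + t * m i) (m i) t := by
        simpa using (hasDerivAt_mul_const (m i)).const_add (b i)
      have := ((hasDerivAt_phi2 (b i + t * m i)).comp t hl).const_mul ((m i)^2)
      exact this.congr_deriv (by ring)
    have hS := HasDerivAt.fun_sum hsum
    simp only [hg2def, hg3def]
    have := (hS.const_mul (1/(N:ℝ))).fun_add (hasDerivAt_const t (γ * ‖u‖^2))
    exact this.congr_deriv (by ring)
  have e1 : deriv g0 = g1 := funext fun t => (hd0 t).deriv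
  have e2 : deriv g1 = g2 := funext fun t => (hd1 t).deriv
  have e3 : deriv g2 = g3 := funext fun t => (hd2 t).deriv
  have E3 : iteratedDeriv 3 g0 0 = g3 0 := by
    rw [show (3:ℕ) = 0+1+1+1 from rfl, iteratedDeriv_succ, iteratedDeriv_succ, iteratedDeriv_succ,
      iteratedDeriv_zero, e1, e2, e3]
  have E2 : iteratedDeriv 2 g0 0 = g2 0 := by
    rw [show (2:ℕ) = 0+1+1 from rfl, iteratedDeriv_succ, iteratedDeriv_succ,
      iteratedDeriv_zero, e1, e2]
  rw [iteratedFDeriv_line hF w u 3, iteratedFDeriv_line hF w u 2, hline, E3, E2]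
  -- now a purely scalar inequality
  simp only [hg2def, hg3def, zero_mul, add_zero, mul_zero]
  set Ssum : ℝ := ∑ i, (m i)^2 * phi2 (b i) with hSsumdef
  set T : ℝ := ∑ i, (m i)^3 * phi3 (b i) with hTdef
  have hNpos : (0:ℝ) < N := by exact_mod_cast hN
  have hB0 : 0 ≤ B := le_trans (norm_nonneg _) (hB ⟨0, hN⟩)
  have hm : ∀ i, |m i| ≤ B * ‖u‖ := by
    intro i
    have h1 : |m i| = |⟪u, x i⟫| := by
      rw [hmdef]
      rcases hy i with h | h <;> simp [h, abs_mul]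
    rw [h1]
    calc |⟪u, x i⟫| ≤ ‖u‖ * ‖x i‖ := abs_real_inner_le_norm u (x i)
      _ ≤ ‖u‖ * B := by gcongr; exact hB i
      _ = B * ‖u‖ := mul_comm _ _
  have hSsum0 : 0 ≤ Ssum := Finset.sum_nonneg fun i _ =>
    mul_nonneg (sq_nonneg _) (phi2_nonneg _)
  have habsT : |T| ≤ (B * ‖u‖) * Ssum := by
    calc |T| ≤ ∑ i, |(m i)^3 * phi3 (b i)| := Finset.abs_sum_le_sum_abs _ _
      _ ≤ ∑ i, (B*‖u‖) * ((m i)^2 * phi2 (b i)) := by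
          refine Finset.sum_le_sum fun i _ => ?_
          rw [abs_mul, abs_pow, show |m i|^3 = |m i| * (m i)^2 by rw [← sq_abs]; ring]
          calc |m i| * (m i)^2 * |phi3 (b i)|
              ≤ (B*‖u‖) * (m i)^2 * phi2 (b i) := by
                apply mul_le_mul (mul_le_mul_of_nonneg_right (hm i) (sq_nonneg _))
                  (abs_phi3_le _) (abs_nonneg _)
                have : (0:ℝ) ≤ B * ‖u‖ := mul_nonneg hB0 (norm_nonneg u)
                positivity
            _ = (B*‖u‖) * ((m i)^2 * phi2 (b i)) := by ring
      _ = (B*‖u‖) * Ssum := by rw [← Finset.mul_sum, hSsumdef]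
  set P : ℝ := 1/(N:ℝ) * Ssum with hPdef
  set Q : ℝ := γ * ‖u‖^2 with hQdef
  have hP0 : 0 ≤ P := mul_nonneg (by positivity) hSsum0
  have hQ0 : 0 ≤ Q := mul_nonneg hγ.le (sq_nonneg _)
  have hsqγ : 0 < Real.sqrt γ := Real.sqrt_pos.mpr hγ
  have hsqQ : Real.sqrt Q = Real.sqrt γ * ‖u‖ := by
    rw [hQdef, Real.sqrt_mul hγ.le, Real.sqrt_sq (norm_nonneg u)]
  have hrpow : (P+Q) ^ ((3:ℝ)/2) = (P+Q) * Real.sqrt (P+Q) := by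
    rw [show (3:ℝ)/2 = 1 + 1/2 by norm_num, Real.rpow_add' (by positivity) (by norm_num),
      Real.rpow_one, Real.sqrt_eq_rpow]
  calc |1/(N:ℝ) * T| = 1/(N:ℝ) * |T| := by
        rw [abs_mul, abs_of_pos (by positivity : (0:ℝ) < 1/(N:ℝ))]
    _ ≤ 1/(N:ℝ) * ((B*‖u‖)*Ssum) := by
        exact mul_le_mul_of_nonneg_left habsT (by positivity)
    _ = (B/Real.sqrt γ) * (Real.sqrt Q * P) := by
        rw [hsqQ, hPdef]; field_simp
    _ ≤ (B/Real.sqrt γ) * (Real.sqrt (P+Q) * (P+Q)) := by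
        have h1 : Real.sqrt Q ≤ Real.sqrt (P+Q) := Real.sqrt_le_sqrt (le_add_of_nonneg_left hP0)
        have h2 : P ≤ P + Q := le_add_of_nonneg_right hQ0
        have := mul_le_mul h1 h2 hP0 (Real.sqrt_nonneg _)
        exact mul_le_mul_of_nonneg_left this (div_nonneg hB0 hsqγ.le)
    _ = (B/Real.sqrt γ) * (P+Q)^((3:ℝ)/2) := by rw [hrpow]; ring
end

section
/- For p ≥ 3, the smoothed hinge loss φ_p defined piecewise (φ_p(t) = 3/2 - (p-2)/(p-1) - t for t < -(p-3)/(p-1); φ_p(t) = 3/2 - (p-2)/(p-1) - t + (t + (p-3)/(p-1))^p/(p(p-1)) for -(p-3)/(p-1) ≤ t < 1 - (p-3)/(p-1); φ_p(t) = (p+1)/(p(p-1)) - t/(p-1) + (1-t)²/2 for 1 - (p-3)/(p-1) ≤ t < 1; φ_p(t) = (2-t)^p/(p(p-1)) for 1 ≤ t < 2; φ_p(t) = 0 for t ≥ 2) satisfies |φ_p'''(t)| ≤ (p-2)(φ_p''(t))^{1 - 1/(p-2)} for all t where the third derivative exists. -/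
noncomputable def smoothedHinge (p : ℝ) (t : ℝ) : ℝ :=
  if t < -(p - 3) / (p - 1) then 3/2 - (p - 2)/(p - 1) - t
  else if t < 1 - (p - 3)/(p - 1) then
    3/2 - (p - 2)/(p - 1) - t + (t + (p - 3)/(p - 1)) ^ p / (p * (p - 1))
  else if t < 1 then (p + 1)/(p * (p - 1)) - t/(p - 1) + (1 - t) ^ 2 / 2
  else if t < 2 then (2 - t) ^ p / (p * (p - 1))
  else 0

open Set Filter

noncomputable def sh1 (p t : ℝ) : ℝ :=
  if t < -(p - 3) / (p - 1) then -1
  else if t < 1 - (p - 3)/(p - 1) then -1 + (t + (p - 3)/(p - 1)) ^ (p - 1) / (p - 1)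
  else if t < 1 then t - 1 - 1/(p - 1)
  else if t < 2 then -((2 - t) ^ (p - 1) / (p - 1))
  else 0

noncomputable def sh2 (p t : ℝ) : ℝ :=
  if t < -(p - 3) / (p - 1) then 0
  else if t < 1 - (p - 3)/(p - 1) then (t + (p - 3)/(p - 1)) ^ (p - 2)
  else if t < 1 then 1
  else if t < 2 then (2 - t) ^ (p - 2)
  else 0

private lemma glueDeriv {f : ℝ → ℝ} {x d : ℝ} (hl : HasDerivWithinAt f d (Iic x) x)
    (hr : HasDerivWithinAt f d (Ici x) x) : HasDerivAt f d x := by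
  have h := hl.union hr
  rw [Iic_union_Ici] at h
  exact hasDerivWithinAt_univ.mp h

private lemma notDiff {f : ℝ → ℝ} {x l r : ℝ} (hl : HasDerivWithinAt f l (Iic x) x)
    (hr : HasDerivWithinAt f r (Ici x) x) (hlr : l ≠ r) : ¬ DifferentiableAt ℝ f x := by
  intro h
  have hd := h.hasDerivAt
  have h1 := (hd.hasDerivWithinAt (s := Iic x)).derivWithin (uniqueDiffOn_Iic x x self_mem_Iic)
  have h2 := hl.derivWithin (uniqueDiffOn_Iic x x self_mem_Iic)
  have h3 := (hd.hasDerivWithinAt (s := Ici x)).derivWithin (uniqueDiffOn_Ici x x self_mem_Ici)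
  have h4 := hr.derivWithin (uniqueDiffOn_Ici x x self_mem_Ici)
  exact hlr (by rw [← h2, h1, ← h4, h3])

private lemma hdwLeft {f g : ℝ → ℝ} {x d lo : ℝ} (hlo : lo < x) (hg : HasDerivAt g d x)
    (hfg : ∀ y, lo < y → y ≤ x → f y = g y) : HasDerivWithinAt f d (Iic x) x := by
  refine (hg.hasDerivWithinAt).congr_of_eventuallyEq ?_ (hfg x hlo le_rfl)
  filter_upwards [mem_nhdsWithin_of_mem_nhds (Ioi_mem_nhds hlo), self_mem_nhdsWithin] with y h1 h2
  exact hfg y h1 h2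

private lemma hdwRight {f g : ℝ → ℝ} {x d hi : ℝ} (hhi : x < hi) (hg : HasDerivAt g d x)
    (hfg : ∀ y, x ≤ y → y < hi → f y = g y) : HasDerivWithinAt f d (Ici x) x := by
  refine (hg.hasDerivWithinAt).congr_of_eventuallyEq ?_ (hfg x le_rfl hhi)
  filter_upwards [mem_nhdsWithin_of_mem_nhds (Iio_mem_nhds hhi), self_mem_nhdsWithin] with y h1 h2
  exact hfg y h2 h1

private lemma hdRpowAdd (c q : ℝ) (hq : 1 ≤ q) (t : ℝ) :
    HasDerivAt (fun s : ℝ => (s + c) ^ q) (q * (t + c) ^ (q - 1)) t := by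
  have h := (Real.hasDerivAt_rpow_const (x := t + c) (p := q) (Or.inr hq)).comp t
    ((hasDerivAt_id t).add_const c)
  exact h.congr_deriv (by ring)

private lemma hdRpowSub (q : ℝ) (hq : 1 ≤ q) (t : ℝ) :
    HasDerivAt (fun s : ℝ => (2 - s) ^ q) (-(q * (2 - t) ^ (q - 1))) t := by
  have h := (Real.hasDerivAt_rpow_const (x := 2 - t) (p := q) (Or.inr hq)).comp t
    ((hasDerivAt_id t).const_sub 2)
  exact h.congr_deriv (by ring)

lemma smoothedHinge_hasDeriv (p : ℝ) (hp : 3 ≤ p) (t : ℝ) :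
    HasDerivAt (smoothedHinge p) (sh1 p t) t := by
  have hp1 : (0:ℝ) < p - 1 := by linarith
  have hp0 : (0:ℝ) < p := by linarith
  have hc0 : 0 ≤ (p - 3)/(p - 1) := div_nonneg (by linarith) hp1.le
  have hc1 : (p - 3)/(p - 1) < 1 := (div_lt_one hp1).2 (by linarith)
  have hA0 : -(p - 3) / (p - 1) ≤ 0 := by rw [neg_div]; simpa using hc0
  have hAB : -(p - 3) / (p - 1) < 1 - (p - 3)/(p - 1) := by rw [neg_div]; linarith
  have hB1 : 1 - (p - 3)/(p - 1) ≤ 1 := by linarith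
  have hAc : -(p - 3) / (p - 1) + (p - 3)/(p - 1) = 0 := by ring
  have hBc : 1 - (p - 3)/(p - 1) + (p - 3)/(p - 1) = 1 := by ring
  -- branch derivative facts
  have hf1 : ∀ s : ℝ, HasDerivAt (fun y : ℝ => 3/2 - (p - 2)/(p - 1) - y) (-1) s := by
    intro s
    simpa using (hasDerivAt_id s).const_sub (3/2 - (p - 2)/(p - 1))
  have hf2 : ∀ s : ℝ, HasDerivAt
      (fun y : ℝ => 3/2 - (p - 2)/(p - 1) - y + (y + (p - 3)/(p - 1)) ^ p / (p * (p - 1)))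
      (-1 + (s + (p - 3)/(p - 1)) ^ (p - 1) / (p - 1)) s := by
    intro s
    have h := (hf1 s).add ((hdRpowAdd ((p - 3)/(p - 1)) p (by linarith) s).div_const (p * (p - 1)))
    convert h using 1; rfl; rfl; rfl
    rw [mul_div_mul_left _ _ hp0.ne']
  have hf3 : ∀ s : ℝ, HasDerivAt
      (fun y : ℝ => (p + 1)/(p * (p - 1)) - y/(p - 1) + (1 - y) ^ 2 / 2)
      (s - 1 - 1/(p - 1)) s := by
    intro s
    have h := (((hasDerivAt_id s).div_const (p - 1)).const_sub ((p + 1)/(p * (p - 1)))).add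
      ((((hasDerivAt_id s).const_sub 1).pow 2).div_const 2)
    convert h using 1; rfl; rfl; rfl
    norm_num
    ring
  have hf4 : ∀ s : ℝ, HasDerivAt (fun y : ℝ => (2 - y) ^ p / (p * (p - 1)))
      (-((2 - s) ^ (p - 1) / (p - 1))) s := by
    intro s
    have h := (hdRpowSub p (by linarith) s).div_const (p * (p - 1))
    convert h using 1; rfl; rfl
    rw [neg_div, mul_div_mul_left _ _ hp0.ne']
  -- piecewise equality facts
  have hE1 : ∀ y, y < -(p - 3) / (p - 1) →
      smoothedHinge p y = 3/2 - (p - 2)/(p - 1) - y := by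
    intro y hy; simp only [smoothedHinge]; rw [if_pos hy]
  have hE2 : ∀ y, ¬(y < -(p - 3) / (p - 1)) → y < 1 - (p - 3)/(p - 1) →
      smoothedHinge p y = 3/2 - (p - 2)/(p - 1) - y + (y + (p - 3)/(p - 1)) ^ p / (p * (p - 1)) := by
    intro y hy1 hy2; simp only [smoothedHinge]; rw [if_neg hy1, if_pos hy2]
  have hE3 : ∀ y, ¬(y < 1 - (p - 3)/(p - 1)) → y < 1 →
      smoothedHinge p y = (p + 1)/(p * (p - 1)) - y/(p - 1) + (1 - y) ^ 2 / 2 := by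
    intro y hy1 hy2; simp only [smoothedHinge]
    rw [if_neg (by push_neg at hy1 ⊢; linarith), if_neg hy1, if_pos hy2]
  have hE4 : ∀ y, ¬(y < 1) → y < 2 →
      smoothedHinge p y = (2 - y) ^ p / (p * (p - 1)) := by
    intro y hy1 hy2; simp only [smoothedHinge]
    rw [if_neg (by push_neg at hy1 ⊢; linarith), if_neg (by push_neg at hy1 ⊢; linarith),
      if_neg hy1, if_pos hy2]
  have hE5 : ∀ y, ¬(y < 2) → smoothedHinge p y = 0 := by
    intro y hy; simp only [smoothedHinge]
    rw [if_neg (by push_neg at hy ⊢; linarith), if_neg (by push_neg at hy ⊢; linarith),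
      if_neg (by push_neg at hy ⊢; linarith), if_neg hy]
  rcases lt_trichotomy t (-(p - 3) / (p - 1)) with h1 | h1 | h1
  · -- interior of branch 1
    have hv : sh1 p t = -1 := by simp only [sh1]; rw [if_pos h1]
    rw [hv]
    exact (hf1 t).congr_of_eventuallyEq
      (eventuallyEq_of_mem (Iio_mem_nhds h1) fun y hy => hE1 y hy)
  · -- at the first kink
    subst h1
    have hv : sh1 p (-(p - 3) / (p - 1)) = -1 := by
      simp only [sh1]
      rw [if_neg (lt_irrefl _), if_pos hAB, hAc, Real.zero_rpow hp1.ne', zero_div, add_zero]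
    rw [hv]
    have hval : smoothedHinge p (-(p - 3) / (p - 1))
        = 3/2 - (p - 2)/(p - 1) - (-(p - 3) / (p - 1)) := by
      rw [hE2 _ (lt_irrefl _) hAB, hAc, Real.zero_rpow hp0.ne', zero_div, add_zero]
    have h2 : HasDerivAt
        (fun y : ℝ => 3/2 - (p - 2)/(p - 1) - y + (y + (p - 3)/(p - 1)) ^ p / (p * (p - 1)))
        (-1) (-(p - 3) / (p - 1)) := by
      have h := hf2 (-(p - 3) / (p - 1))
      rwa [hAc, Real.zero_rpow hp1.ne', zero_div, add_zero] at h
    refine glueDeriv (hdwLeft (lo := -(p - 3) / (p - 1) - 1) (by linarith) (hf1 _) ?_)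
      (hdwRight hAB h2 ?_)
    · intro y hy1 hy2
      rcases hy2.lt_or_eq with h | h
      · exact hE1 y h
      · rw [h]; exact hval
    · intro y hy1 hy2
      exact hE2 y (not_lt.2 hy1) hy2
  · rcases lt_trichotomy t (1 - (p - 3)/(p - 1)) with h2 | h2 | h2
    · -- interior of branch 2
      have hv : sh1 p t = -1 + (t + (p - 3)/(p - 1)) ^ (p - 1) / (p - 1) := by
        simp only [sh1]; rw [if_neg (not_lt.2 h1.le), if_pos h2]
      rw [hv]
      exact (hf2 t).congr_of_eventuallyEq
        (eventuallyEq_of_mem (Ioo_mem_nhds h1 h2) fun y hy => hE2 y (not_lt.2 hy.1.le) hy.2)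
    · -- at the second kink t = B
      rcases eq_or_lt_of_le hp with hp3 | hp3
      · -- p = 3, so B = 1
        subst hp3
        have hB : (1:ℝ) - (3 - 3)/(3 - 1) = 1 := by norm_num
        rw [hB] at h2
        subst h2
        have hv : sh1 3 1 = -(1/2) := by
          simp only [sh1]
          rw [if_neg (by norm_num), if_neg (by norm_num), if_neg (lt_irrefl _),
            if_pos (by norm_num)]
          norm_num [Real.one_rpow]
        rw [hv]
        have hL : HasDerivAt
            (fun y : ℝ => 3/2 - ((3:ℝ) - 2)/(3 - 1) - y + (y + (3 - 3)/(3 - 1)) ^ (3:ℝ) / (3 * (3 - 1)))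
            (-(1/2)) 1 := by
          have h := hf2 1
          have e : -1 + ((1:ℝ) + (3 - 3)/(3 - 1)) ^ ((3:ℝ) - 1) / (3 - 1) = -(1/2) := by
            norm_num [Real.one_rpow]
          rwa [e] at h
        have hR : HasDerivAt (fun y : ℝ => ((2:ℝ) - y) ^ (3:ℝ) / (3 * (3 - 1))) (-(1/2)) 1 := by
          have h := hf4 1
          have e : -(((2:ℝ) - 1) ^ ((3:ℝ) - 1) / (3 - 1)) = -(1/2) := by
            norm_num [Real.one_rpow]
          rwa [e] at h
        refine glueDeriv (hdwLeft (lo := (0:ℝ)) one_pos hL ?_) (hdwRight (hi := (2:ℝ)) one_lt_two hR ?_)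
        · intro y hy1 hy2
          rcases hy2.lt_or_eq with h | h
          · exact hE2 y (by norm_num; linarith) (by norm_num; linarith)
          · subst h
            rw [hE4 1 (lt_irrefl _) one_lt_two]
            norm_num [Real.one_rpow]
        · intro y hy1 hy2
          exact hE4 y (not_lt.2 hy1) hy2
      · -- p > 3, so B < 1
        have hBlt : 1 - (p - 3)/(p - 1) < 1 := by
          have : 0 < (p - 3)/(p - 1) := div_pos (by linarith) hp1
          linarith
        subst h2
        have hv : sh1 p (1 - (p - 3)/(p - 1)) = 1 - (p - 3)/(p - 1) - 1 - 1/(p - 1) := by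
          simp only [sh1]
          rw [if_neg (not_lt.2 hAB.le), if_neg (lt_irrefl _), if_pos hBlt]
        rw [hv]
        have hval : smoothedHinge p (1 - (p - 3)/(p - 1))
            = 3/2 - (p - 2)/(p - 1) - (1 - (p - 3)/(p - 1))
              + ((1 - (p - 3)/(p - 1)) + (p - 3)/(p - 1)) ^ p / (p * (p - 1)) := by
          rw [hE3 _ (lt_irrefl _) hBlt, hBc, Real.one_rpow]
          field_simp
          ring
        have hL : HasDerivAt
            (fun y : ℝ => 3/2 - (p - 2)/(p - 1) - y + (y + (p - 3)/(p - 1)) ^ p / (p * (p - 1)))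
            (1 - (p - 3)/(p - 1) - 1 - 1/(p - 1)) (1 - (p - 3)/(p - 1)) := by
          have h := hf2 (1 - (p - 3)/(p - 1))
          have e : -1 + ((1 - (p - 3)/(p - 1)) + (p - 3)/(p - 1)) ^ (p - 1) / (p - 1)
              = 1 - (p - 3)/(p - 1) - 1 - 1/(p - 1) := by
            rw [hBc, Real.one_rpow]
            field_simp
            ring
          rwa [e] at h
        refine glueDeriv (hdwLeft hAB hL ?_) (hdwRight hBlt (hf3 _) ?_)
        · intro y hy1 hy2
          rcases hy2.lt_or_eq with h | h
          · exact hE2 y (not_lt.2 (by linarith)) h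
          · rw [h]; exact hval
        · intro y hy1 hy2
          exact hE3 y (not_lt.2 hy1) hy2
    · rcases lt_trichotomy t 1 with h3 | h3 | h3
      · -- interior of branch 3
        have hv : sh1 p t = t - 1 - 1/(p - 1) := by
          simp only [sh1]
          rw [if_neg (not_lt.2 (by linarith)), if_neg (not_lt.2 h2.le), if_pos h3]
        rw [hv]
        exact (hf3 t).congr_of_eventuallyEq
          (eventuallyEq_of_mem (Ioo_mem_nhds h2 h3) fun y hy => hE3 y (not_lt.2 hy.1.le) hy.2)
      · -- t = 1 (and B < 1 since B < t = 1)
        subst h3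
        have hv : sh1 p 1 = -(1/(p - 1)) := by
          simp only [sh1]
          rw [if_neg (not_lt.2 (by linarith)), if_neg (not_lt.2 h2.le), if_neg (lt_irrefl _),
            if_pos one_lt_two]
          norm_num [Real.one_rpow]
        rw [hv]
        have hL : HasDerivAt
            (fun y : ℝ => (p + 1)/(p * (p - 1)) - y/(p - 1) + (1 - y) ^ 2 / 2)
            (-(1/(p - 1))) 1 := by
          have h := hf3 1
          have e : (1:ℝ) - 1 - 1/(p - 1) = -(1/(p - 1)) := by ring
          rwa [e] at h
        have hR : HasDerivAt (fun y : ℝ => (2 - y) ^ p / (p * (p - 1))) (-(1/(p - 1))) 1 := by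
          have h := hf4 1
          have e : -(((2:ℝ) - 1) ^ (p - 1) / (p - 1)) = -(1/(p - 1)) := by
            norm_num [Real.one_rpow]
          rwa [e] at h
        refine glueDeriv (hdwLeft h2 hL ?_) (hdwRight one_lt_two hR ?_)
        · intro y hy1 hy2
          rcases hy2.lt_or_eq with h | h
          · exact hE3 y (not_lt.2 hy1.le) h
          · subst h
            rw [hE4 1 (lt_irrefl _) one_lt_two]
            norm_num [Real.one_rpow]
            field_simp
            ring
        · intro y hy1 hy2
          exact hE4 y (not_lt.2 hy1) hy2
      · rcases lt_trichotomy t 2 with h4 | h4 | h4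
        · -- interior of branch 4
          have hv : sh1 p t = -((2 - t) ^ (p - 1) / (p - 1)) := by
            simp only [sh1]
            rw [if_neg (not_lt.2 (by linarith)), if_neg (not_lt.2 (by linarith)),
              if_neg (not_lt.2 h3.le), if_pos h4]
          rw [hv]
          exact (hf4 t).congr_of_eventuallyEq
            (eventuallyEq_of_mem (Ioo_mem_nhds h3 h4) fun y hy => hE4 y (not_lt.2 hy.1.le) hy.2)
        · -- t = 2
          subst h4
          have hv : sh1 p 2 = 0 := by
            simp only [sh1]
            rw [if_neg (not_lt.2 (by linarith)), if_neg (not_lt.2 (by linarith)),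
              if_neg (not_lt.2 one_le_two), if_neg (lt_irrefl _)]
          rw [hv]
          have hL : HasDerivAt (fun y : ℝ => (2 - y) ^ p / (p * (p - 1))) 0 2 := by
            have h := hf4 2
            have e : -(((2:ℝ) - 2) ^ (p - 1) / (p - 1)) = 0 := by
              norm_num [Real.zero_rpow hp1.ne']
            rwa [e] at h
          refine glueDeriv (hdwLeft one_lt_two hL ?_)
            (hdwRight (hi := (3:ℝ)) (by norm_num) (hasDerivAt_const 2 0) ?_)
          · intro y hy1 hy2
            rcases hy2.lt_or_eq with h | h
            · exact hE4 y (not_lt.2 hy1.le) h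
            · subst h
              rw [hE5 2 (lt_irrefl _)]
              norm_num [Real.zero_rpow hp0.ne']
          · intro y hy1 hy2
            exact hE5 y (not_lt.2 hy1)
        · -- interior of branch 5
          have hv : sh1 p t = 0 := by
            simp only [sh1]
            rw [if_neg (not_lt.2 (by linarith)), if_neg (not_lt.2 (by linarith)),
              if_neg (not_lt.2 (by linarith)), if_neg (not_lt.2 h4.le)]
          rw [hv]
          exact (hasDerivAt_const t 0).congr_of_eventuallyEq
            (eventuallyEq_of_mem (Ioi_mem_nhds h4) fun y hy => hE5 y (not_lt.2 (le_of_lt hy)))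
lemma sh1_hasDeriv (p : ℝ) (hp : 3 ≤ p) (t : ℝ) :
    HasDerivAt (sh1 p) (sh2 p t) t := by
  have hp1 : (0:ℝ) < p - 1 := by linarith
  have hp2 : (0:ℝ) < p - 2 := by linarith
  have hc0 : 0 ≤ (p - 3)/(p - 1) := div_nonneg (by linarith) hp1.le
  have hc1 : (p - 3)/(p - 1) < 1 := (div_lt_one hp1).2 (by linarith)
  have hA0 : -(p - 3) / (p - 1) ≤ 0 := by rw [neg_div]; simpa using hc0
  have hAB : -(p - 3) / (p - 1) < 1 - (p - 3)/(p - 1) := by rw [neg_div]; linarith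
  have hB1 : 1 - (p - 3)/(p - 1) ≤ 1 := by linarith
  have hAc : -(p - 3) / (p - 1) + (p - 3)/(p - 1) = 0 := by ring
  have hBc : 1 - (p - 3)/(p - 1) + (p - 3)/(p - 1) = 1 := by ring
  have hg2 : ∀ s : ℝ, HasDerivAt (fun y : ℝ => -1 + (y + (p - 3)/(p - 1)) ^ (p - 1) / (p - 1))
      ((s + (p - 3)/(p - 1)) ^ (p - 2)) s := by
    intro s
    have h := (((hdRpowAdd ((p - 3)/(p - 1)) (p - 1) (by linarith) s).div_const (p - 1)).const_add (-1))
    convert h using 1; rfl; rfl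
    rw [show p - 1 - 1 = p - 2 from by ring]
    exact (mul_div_cancel_left₀ _ hp1.ne').symm
  have hg3 : ∀ s : ℝ, HasDerivAt (fun y : ℝ => y - 1 - 1/(p - 1)) 1 s := by
    intro s
    simpa using ((hasDerivAt_id s).sub_const 1).sub_const (1/(p - 1))
  have hg4 : ∀ s : ℝ, HasDerivAt (fun y : ℝ => -((2 - y) ^ (p - 1) / (p - 1)))
      ((2 - s) ^ (p - 2)) s := by
    intro s
    have h := ((hdRpowSub (p - 1) (by linarith) s).div_const (p - 1)).neg
    convert h using 1; rfl; rfl; rfl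
    rw [show p - 1 - 1 = p - 2 from by ring, neg_div, neg_neg, mul_div_cancel_left₀ _ hp1.ne']
  have hF1 : ∀ y, y < -(p - 3) / (p - 1) → sh1 p y = -1 := by
    intro y hy; simp only [sh1]; rw [if_pos hy]
  have hF2 : ∀ y, ¬(y < -(p - 3) / (p - 1)) → y < 1 - (p - 3)/(p - 1) →
      sh1 p y = -1 + (y + (p - 3)/(p - 1)) ^ (p - 1) / (p - 1) := by
    intro y hy1 hy2; simp only [sh1]; rw [if_neg hy1, if_pos hy2]
  have hF3 : ∀ y, ¬(y < 1 - (p - 3)/(p - 1)) → y < 1 → sh1 p y = y - 1 - 1/(p - 1) := by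
    intro y hy1 hy2; simp only [sh1]
    rw [if_neg (by push_neg at hy1 ⊢; linarith), if_neg hy1, if_pos hy2]
  have hF4 : ∀ y, ¬(y < 1) → y < 2 → sh1 p y = -((2 - y) ^ (p - 1) / (p - 1)) := by
    intro y hy1 hy2; simp only [sh1]
    rw [if_neg (by push_neg at hy1 ⊢; linarith), if_neg (by push_neg at hy1 ⊢; linarith),
      if_neg hy1, if_pos hy2]
  have hF5 : ∀ y, ¬(y < 2) → sh1 p y = 0 := by
    intro y hy; simp only [sh1]
    rw [if_neg (by push_neg at hy ⊢; linarith), if_neg (by push_neg at hy ⊢; linarith),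
      if_neg (by push_neg at hy ⊢; linarith), if_neg hy]
  rcases lt_trichotomy t (-(p - 3) / (p - 1)) with h1 | h1 | h1
  · have hv : sh2 p t = 0 := by simp only [sh2]; rw [if_pos h1]
    rw [hv]
    exact (hasDerivAt_const t (-1)).congr_of_eventuallyEq
      (eventuallyEq_of_mem (Iio_mem_nhds h1) fun y hy => hF1 y hy)
  · subst h1
    have hv : sh2 p (-(p - 3) / (p - 1)) = 0 := by
      simp only [sh2]
      rw [if_neg (lt_irrefl _), if_pos hAB, hAc, Real.zero_rpow hp2.ne']
    rw [hv]
    have hvalA : sh1 p (-(p - 3) / (p - 1)) = -1 := by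
      rw [hF2 _ (lt_irrefl _) hAB, hAc, Real.zero_rpow hp1.ne', zero_div, add_zero]
    have hR : HasDerivAt (fun y : ℝ => -1 + (y + (p - 3)/(p - 1)) ^ (p - 1) / (p - 1))
        0 (-(p - 3) / (p - 1)) := by
      have h := hg2 (-(p - 3) / (p - 1))
      rwa [hAc, Real.zero_rpow hp2.ne'] at h
    refine glueDeriv
      (hdwLeft (lo := -(p - 3) / (p - 1) - 1) (by linarith) (hasDerivAt_const _ (-1)) ?_)
      (hdwRight hAB hR ?_)
    · intro y hy1 hy2
      rcases hy2.lt_or_eq with h | h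
      · exact hF1 y h
      · rw [h]; exact hvalA
    · intro y hy1 hy2
      exact hF2 y (not_lt.2 hy1) hy2
  · rcases lt_trichotomy t (1 - (p - 3)/(p - 1)) with h2 | h2 | h2
    · have hv : sh2 p t = (t + (p - 3)/(p - 1)) ^ (p - 2) := by
        simp only [sh2]; rw [if_neg (not_lt.2 h1.le), if_pos h2]
      rw [hv]
      exact (hg2 t).congr_of_eventuallyEq
        (eventuallyEq_of_mem (Ioo_mem_nhds h1 h2) fun y hy => hF2 y (not_lt.2 hy.1.le) hy.2)
    · rcases eq_or_lt_of_le hp with hp3 | hp3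
      · subst hp3
        have hB : (1:ℝ) - (3 - 3)/(3 - 1) = 1 := by norm_num
        rw [hB] at h2
        subst h2
        have hv : sh2 3 1 = 1 := by
          simp only [sh2]
          rw [if_neg (by norm_num), if_neg (by norm_num), if_neg (lt_irrefl _),
            if_pos (by norm_num)]
          norm_num [Real.rpow_one]
        rw [hv]
        have hL : HasDerivAt (fun y : ℝ => -1 + (y + ((3:ℝ) - 3)/(3 - 1)) ^ ((3:ℝ) - 1) / (3 - 1)) 1 1 := by
          have h := hg2 1
          have e : ((1:ℝ) + (3 - 3)/(3 - 1)) ^ ((3:ℝ) - 2) = 1 := by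
            norm_num [Real.rpow_one]
          rwa [e] at h
        have hR : HasDerivAt (fun y : ℝ => -(((2:ℝ) - y) ^ ((3:ℝ) - 1) / (3 - 1))) 1 1 := by
          have h := hg4 1
          have e : ((2:ℝ) - 1) ^ ((3:ℝ) - 2) = 1 := by norm_num [Real.rpow_one]
          rwa [e] at h
        refine glueDeriv (hdwLeft (lo := (0:ℝ)) one_pos hL ?_) (hdwRight (hi := (2:ℝ)) one_lt_two hR ?_)
        · intro y hy1 hy2
          rcases hy2.lt_or_eq with h | h
          · exact hF2 y (by norm_num; linarith) (by norm_num; linarith)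
          · subst h
            rw [hF4 1 (lt_irrefl _) one_lt_two]
            norm_num [Real.one_rpow]
        · intro y hy1 hy2
          exact hF4 y (not_lt.2 hy1) hy2
      · have hBlt : 1 - (p - 3)/(p - 1) < 1 := by
          have : 0 < (p - 3)/(p - 1) := div_pos (by linarith) hp1
          linarith
        subst h2
        have hv : sh2 p (1 - (p - 3)/(p - 1)) = 1 := by
          simp only [sh2]
          rw [if_neg (not_lt.2 hAB.le), if_neg (lt_irrefl _), if_pos hBlt]
        rw [hv]
        have hL : HasDerivAt (fun y : ℝ => -1 + (y + (p - 3)/(p - 1)) ^ (p - 1) / (p - 1))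
            1 (1 - (p - 3)/(p - 1)) := by
          have h := hg2 (1 - (p - 3)/(p - 1))
          rwa [hBc, Real.one_rpow] at h
        refine glueDeriv (hdwLeft hAB hL ?_) (hdwRight hBlt (hg3 _) ?_)
        · intro y hy1 hy2
          rcases hy2.lt_or_eq with h | h
          · exact hF2 y (not_lt.2 (by linarith)) h
          · rw [h, hF3 _ (lt_irrefl _) hBlt, hBc, Real.one_rpow]
            field_simp
            ring
        · intro y hy1 hy2
          exact hF3 y (not_lt.2 hy1) hy2
    · rcases lt_trichotomy t 1 with h3 | h3 | h3
      · have hv : sh2 p t = 1 := by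
          simp only [sh2]
          rw [if_neg (not_lt.2 (by linarith)), if_neg (not_lt.2 h2.le), if_pos h3]
        rw [hv]
        exact (hg3 t).congr_of_eventuallyEq
          (eventuallyEq_of_mem (Ioo_mem_nhds h2 h3) fun y hy => hF3 y (not_lt.2 hy.1.le) hy.2)
      · subst h3
        have hv : sh2 p 1 = 1 := by
          simp only [sh2]
          rw [if_neg (not_lt.2 (by linarith)), if_neg (not_lt.2 h2.le), if_neg (lt_irrefl _),
            if_pos one_lt_two]
          norm_num [Real.one_rpow]
        rw [hv]
        have hR : HasDerivAt (fun y : ℝ => -((2 - y) ^ (p - 1) / (p - 1))) 1 1 := by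
          have h := hg4 1
          have e : ((2:ℝ) - 1) ^ (p - 2) = 1 := by norm_num [Real.one_rpow]
          rwa [e] at h
        refine glueDeriv (hdwLeft h2 (hg3 1) ?_) (hdwRight one_lt_two hR ?_)
        · intro y hy1 hy2
          rcases hy2.lt_or_eq with h | h
          · exact hF3 y (not_lt.2 hy1.le) h
          · subst h
            rw [hF4 1 (lt_irrefl _) one_lt_two]
            norm_num [Real.one_rpow]
        · intro y hy1 hy2
          exact hF4 y (not_lt.2 hy1) hy2
      · rcases lt_trichotomy t 2 with h4 | h4 | h4
        · have hv : sh2 p t = (2 - t) ^ (p - 2) := by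
            simp only [sh2]
            rw [if_neg (not_lt.2 (by linarith)), if_neg (not_lt.2 (by linarith)),
              if_neg (not_lt.2 h3.le), if_pos h4]
          rw [hv]
          exact (hg4 t).congr_of_eventuallyEq
            (eventuallyEq_of_mem (Ioo_mem_nhds h3 h4) fun y hy => hF4 y (not_lt.2 hy.1.le) hy.2)
        · subst h4
          have hv : sh2 p 2 = 0 := by
            simp only [sh2]
            rw [if_neg (not_lt.2 (by linarith)), if_neg (not_lt.2 (by linarith)),
              if_neg (not_lt.2 one_le_two), if_neg (lt_irrefl _)]
          rw [hv]
          have hL : HasDerivAt (fun y : ℝ => -((2 - y) ^ (p - 1) / (p - 1))) 0 2 := by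
            have h := hg4 2
            have e : ((2:ℝ) - 2) ^ (p - 2) = 0 := by
              norm_num [Real.zero_rpow hp2.ne']
            rwa [e] at h
          refine glueDeriv (hdwLeft one_lt_two hL ?_)
            (hdwRight (hi := (3:ℝ)) (by norm_num) (hasDerivAt_const 2 0) ?_)
          · intro y hy1 hy2
            rcases hy2.lt_or_eq with h | h
            · exact hF4 y (not_lt.2 hy1.le) h
            · subst h
              rw [hF5 2 (lt_irrefl _)]
              norm_num [Real.zero_rpow hp1.ne']
          · intro y hy1 hy2
            exact hF5 y (not_lt.2 hy1)
        · have hv : sh2 p t = 0 := by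
            simp only [sh2]
            rw [if_neg (not_lt.2 (by linarith)), if_neg (not_lt.2 (by linarith)),
              if_neg (not_lt.2 (by linarith)), if_neg (not_lt.2 h4.le)]
          rw [hv]
          exact (hasDerivAt_const t 0).congr_of_eventuallyEq
            (eventuallyEq_of_mem (Ioi_mem_nhds h4) fun y hy => hF5 y (not_lt.2 (le_of_lt hy)))

lemma deriv2_smoothedHinge (p : ℝ) (hp : 3 ≤ p) :
    deriv (deriv (smoothedHinge p)) = sh2 p := by
  have h1 : deriv (smoothedHinge p) = sh1 p :=
    funext fun t => (smoothedHinge_hasDeriv p hp t).deriv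
  rw [h1]
  exact funext fun t => (sh1_hasDeriv p hp t).deriv
/-- For `p ≥ 3`, the smoothed hinge loss satisfies
`|φ_p'''(t)| ≤ (p-2) (φ_p''(t))^{1 - 1/(p-2)}` wherever the third derivative
exists. -/
theorem smoothedHinge_third_deriv_bound (p : ℝ) (hp : 3 ≤ p) :
    ∀ t : ℝ, DifferentiableAt ℝ (deriv (deriv (smoothedHinge p))) t →
      |deriv (deriv (deriv (smoothedHinge p))) t|
        ≤ (p - 2) * (deriv (deriv (smoothedHinge p)) t) ^ (1 - 1/(p - 2)) := by
  have hD := deriv2_smoothedHinge p hp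
  intro t h
  rw [hD] at h ⊢
  have hp1 : (0:ℝ) < p - 1 := by linarith
  have hp2 : (0:ℝ) < p - 2 := by linarith
  have hc0 : 0 ≤ (p - 3)/(p - 1) := div_nonneg (by linarith) hp1.le
  have hc1 : (p - 3)/(p - 1) < 1 := (div_lt_one hp1).2 (by linarith)
  have hA0 : -(p - 3) / (p - 1) ≤ 0 := by rw [neg_div]; simpa using hc0
  have hAB : -(p - 3) / (p - 1) < 1 - (p - 3)/(p - 1) := by rw [neg_div]; linarith
  have hB1 : 1 - (p - 3)/(p - 1) ≤ 1 := by linarith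
  have hAc : -(p - 3) / (p - 1) + (p - 3)/(p - 1) = 0 := by ring
  have hBc : 1 - (p - 3)/(p - 1) + (p - 3)/(p - 1) = 1 := by ring
  have hexp : (p - 2) * (1 - 1/(p - 2)) = p - 3 := by
    field_simp
    ring
  have hh2 : ∀ s : ℝ, HasDerivAt (fun y : ℝ => (y + (p - 3)/(p - 1)) ^ (p - 2))
      ((p - 2) * (s + (p - 3)/(p - 1)) ^ (p - 3)) s := by
    intro s
    have h := hdRpowAdd ((p - 3)/(p - 1)) (p - 2) (by linarith) s
    rwa [show p - 2 - 1 = p - 3 from by ring] at h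
  have hh4 : ∀ s : ℝ, HasDerivAt (fun y : ℝ => (2 - y) ^ (p - 2))
      (-((p - 2) * (2 - s) ^ (p - 3))) s := by
    intro s
    have h := hdRpowSub (p - 2) (by linarith) s
    rwa [show p - 2 - 1 = p - 3 from by ring] at h
  have hG1 : ∀ y, y < -(p - 3) / (p - 1) → sh2 p y = 0 := by
    intro y hy; simp only [sh2]; rw [if_pos hy]
  have hG2 : ∀ y, ¬(y < -(p - 3) / (p - 1)) → y < 1 - (p - 3)/(p - 1) →
      sh2 p y = (y + (p - 3)/(p - 1)) ^ (p - 2) := by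
    intro y hy1 hy2; simp only [sh2]; rw [if_neg hy1, if_pos hy2]
  have hG3 : ∀ y, ¬(y < 1 - (p - 3)/(p - 1)) → y < 1 → sh2 p y = 1 := by
    intro y hy1 hy2; simp only [sh2]
    rw [if_neg (by push_neg at hy1 ⊢; linarith), if_neg hy1, if_pos hy2]
  have hG4 : ∀ y, ¬(y < 1) → y < 2 → sh2 p y = (2 - y) ^ (p - 2) := by
    intro y hy1 hy2; simp only [sh2]
    rw [if_neg (by push_neg at hy1 ⊢; linarith), if_neg (by push_neg at hy1 ⊢; linarith),
      if_neg hy1, if_pos hy2]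
  have hG5 : ∀ y, ¬(y < 2) → sh2 p y = 0 := by
    intro y hy; simp only [sh2]
    rw [if_neg (by push_neg at hy ⊢; linarith), if_neg (by push_neg at hy ⊢; linarith),
      if_neg (by push_neg at hy ⊢; linarith), if_neg hy]
  rcases lt_trichotomy t (-(p - 3) / (p - 1)) with h1 | h1 | h1
  · -- t < A : second derivative is locally 0
    have he : sh2 p =ᶠ[nhds t] fun _ => (0:ℝ) :=
      eventuallyEq_of_mem (Iio_mem_nhds h1) fun y hy => hG1 y hy
    rw [he.deriv_eq, deriv_const, hG1 t h1, abs_zero]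
    exact mul_nonneg hp2.le (Real.rpow_nonneg le_rfl _)
  · -- t = A
    subst h1
    rcases eq_or_lt_of_le hp with hp3 | hp3
    · -- p = 3 : sh2 is not differentiable at A; contradiction
      subst hp3
      have hl : HasDerivWithinAt (sh2 3) 0 (Iic (-(3 - 3) / (3 - 1))) (-(3 - 3) / (3 - 1)) := by
        refine hdwLeft (lo := -(3 - 3) / (3 - 1) - 1) (by linarith) (hasDerivAt_const _ 0) ?_
        intro y hy1 hy2
        rcases hy2.lt_or_eq with hy | hy
        · exact hG1 y hy
        · rw [hy, hG2 _ (lt_irrefl _) hAB, hAc]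
          rw [Real.zero_rpow (by norm_num)]
      have hr : HasDerivWithinAt (sh2 3) 1 (Ici (-(3 - 3) / (3 - 1))) (-(3 - 3) / (3 - 1)) := by
        have hR := hh2 (-(3 - 3) / (3 - 1))
        rw [hAc] at hR
        have e : ((3:ℝ) - 2) * (0:ℝ) ^ ((3:ℝ) - 3) = 1 := by
          norm_num [Real.rpow_zero]
        rw [e] at hR
        refine hdwRight hAB hR ?_
        intro y hy1 hy2
        exact hG2 y (not_lt.2 hy1) hy2
      exact absurd h (notDiff hl hr (by norm_num))
    · -- p > 3 : sh2 has derivative 0 at A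
      have hp3' : (0:ℝ) < p - 3 := by linarith
      have hL : HasDerivWithinAt (sh2 p) 0 (Iic (-(p - 3) / (p - 1))) (-(p - 3) / (p - 1)) := by
        refine hdwLeft (lo := -(p - 3) / (p - 1) - 1) (by linarith) (hasDerivAt_const _ 0) ?_
        intro y hy1 hy2
        rcases hy2.lt_or_eq with hy | hy
        · exact hG1 y hy
        · rw [hy, hG2 _ (lt_irrefl _) hAB, hAc, Real.zero_rpow hp2.ne']
      have hR : HasDerivWithinAt (sh2 p) 0 (Ici (-(p - 3) / (p - 1))) (-(p - 3) / (p - 1)) := by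
        have hR0 := hh2 (-(p - 3) / (p - 1))
        rw [hAc, Real.zero_rpow hp3'.ne', mul_zero] at hR0
        refine hdwRight hAB hR0 ?_
        intro y hy1 hy2
        exact hG2 y (not_lt.2 hy1) hy2
      rw [(glueDeriv hL hR).deriv, hG2 _ (lt_irrefl _) hAB, hAc, Real.zero_rpow hp2.ne',
        abs_zero]
      exact mul_nonneg hp2.le (Real.rpow_nonneg le_rfl _)
  · rcases lt_trichotomy t (1 - (p - 3)/(p - 1)) with h2 | h2 | h2
    · -- A < t < B : the equality case
      have h0 : 0 < t + (p - 3)/(p - 1) := by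
        rw [neg_div] at h1; linarith
      have he : sh2 p =ᶠ[nhds t] fun y => (y + (p - 3)/(p - 1)) ^ (p - 2) :=
        eventuallyEq_of_mem (Ioo_mem_nhds h1 h2) fun y hy => hG2 y (not_lt.2 hy.1.le) hy.2
      rw [he.deriv_eq, (hh2 t).deriv, hG2 t (not_lt.2 h1.le) h2,
        abs_of_nonneg (mul_nonneg hp2.le (Real.rpow_nonneg h0.le _)),
        ← Real.rpow_mul h0.le, hexp]
    · -- t = B : kink of the second derivative
      subst h2
      have hl : HasDerivWithinAt (sh2 p) (p - 2)
          (Iic (1 - (p - 3)/(p - 1))) (1 - (p - 3)/(p - 1)) := by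
        have hL := hh2 (1 - (p - 3)/(p - 1))
        rw [hBc, Real.one_rpow, mul_one] at hL
        refine hdwLeft hAB hL ?_
        intro y hy1 hy2
        rcases hy2.lt_or_eq with hy | hy
        · exact hG2 y (not_lt.2 (by linarith)) hy
        · rw [hy, hBc, Real.one_rpow]
          rcases lt_or_eq_of_le hB1 with hBlt | hBeq
          · exact hG3 _ (lt_irrefl _) hBlt
          · rw [hBeq, hG4 1 (lt_irrefl _) one_lt_two]
            norm_num [Real.one_rpow]
      rcases lt_or_eq_of_le hB1 with hBlt | hBeq
      · -- B < 1 : right side is constant 1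
        have hr : HasDerivWithinAt (sh2 p) 0
            (Ici (1 - (p - 3)/(p - 1))) (1 - (p - 3)/(p - 1)) := by
          refine hdwRight hBlt (hasDerivAt_const _ (1:ℝ)) ?_
          intro y hy1 hy2
          exact hG3 y (not_lt.2 hy1) hy2
        exact absurd h (notDiff hl hr hp2.ne')
      · -- B = 1 : right side is (2-y)^(p-2)
        have hr : HasDerivWithinAt (sh2 p) (-(p - 2))
            (Ici (1 - (p - 3)/(p - 1))) (1 - (p - 3)/(p - 1)) := by
          have hR := hh4 (1 - (p - 3)/(p - 1))
          have e2 : (2:ℝ) - (1 - (p - 3)/(p - 1)) = 1 := by rw [hBeq]; norm_num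
          rw [e2, Real.one_rpow, mul_one] at hR
          refine hdwRight (hi := 2) (by rw [hBeq]; norm_num) hR ?_
          intro y hy1 hy2
          rw [hBeq] at hy1
          exact hG4 y (not_lt.2 hy1) hy2
        refine absurd h (notDiff hl hr ?_)
        intro he
        have : p = 2 := by linarith
        linarith
    · rcases lt_trichotomy t 1 with h3 | h3 | h3
      · -- B < t < 1 : second derivative locally 1
        have he : sh2 p =ᶠ[nhds t] fun _ => (1:ℝ) :=
          eventuallyEq_of_mem (Ioo_mem_nhds h2 h3) fun y hy => hG3 y (not_lt.2 hy.1.le) hy.2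
        rw [he.deriv_eq, deriv_const, hG3 t (not_lt.2 h2.le) h3, abs_zero, Real.one_rpow]
        linarith
      · -- t = 1 : kink; not differentiable
        subst h3
        have hl : HasDerivWithinAt (sh2 p) 0 (Iic 1) 1 := by
          refine hdwLeft h2 (hasDerivAt_const _ (1:ℝ)) ?_
          intro y hy1 hy2
          rcases hy2.lt_or_eq with hy | hy
          · exact hG3 y (not_lt.2 hy1.le) hy
          · rw [hy, hG4 1 (lt_irrefl _) one_lt_two]
            norm_num [Real.one_rpow]
        have hr : HasDerivWithinAt (sh2 p) (-(p - 2)) (Ici 1) 1 := by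
          have hR := hh4 1
          rw [show (2:ℝ) - 1 = 1 from by norm_num, Real.one_rpow, mul_one] at hR
          refine hdwRight one_lt_two hR ?_
          intro y hy1 hy2
          exact hG4 y (not_lt.2 hy1) hy2
        refine absurd h (notDiff hl hr ?_)
        intro he
        linarith
      · rcases lt_trichotomy t 2 with h4 | h4 | h4
        · -- 1 < t < 2 : the other equality case
          have h0 : (0:ℝ) < 2 - t := by linarith
          have he : sh2 p =ᶠ[nhds t] fun y => (2 - y) ^ (p - 2) :=
            eventuallyEq_of_mem (Ioo_mem_nhds h3 h4) fun y hy => hG4 y (not_lt.2 hy.1.le) hy.2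
          rw [he.deriv_eq, (hh4 t).deriv, hG4 t (not_lt.2 h3.le) h4, abs_neg,
            abs_of_nonneg (mul_nonneg hp2.le (Real.rpow_nonneg h0.le _)),
            ← Real.rpow_mul h0.le, hexp]
        · -- t = 2
          subst h4
          rcases eq_or_lt_of_le hp with hp3 | hp3
          · -- p = 3 : kink; not differentiable
            subst hp3
            have hl : HasDerivWithinAt (sh2 3) (-1) (Iic 2) 2 := by
              have hL := hh4 2
              have e : -(((3:ℝ) - 2) * ((2:ℝ) - 2) ^ ((3:ℝ) - 3)) = -1 := by
                norm_num [Real.rpow_zero]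
              rw [e] at hL
              refine hdwLeft one_lt_two hL ?_
              intro y hy1 hy2
              rcases hy2.lt_or_eq with hy | hy
              · exact hG4 y (not_lt.2 hy1.le) hy
              · rw [hy, hG5 2 (lt_irrefl _)]
                norm_num [Real.rpow_one]
            have hr : HasDerivWithinAt (sh2 3) 0 (Ici 2) 2 := by
              refine hdwRight (hi := 3) (by norm_num) (hasDerivAt_const _ (0:ℝ)) ?_
              intro y hy1 hy2
              exact hG5 y (not_lt.2 hy1)
            exact absurd h (notDiff hl hr (by norm_num))
          · -- p > 3 : derivative 0
            have hp3' : (0:ℝ) < p - 3 := by linarith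
            have hL : HasDerivWithinAt (sh2 p) 0 (Iic 2) 2 := by
              have hL0 := hh4 2
              rw [show (2:ℝ) - 2 = 0 from by norm_num, Real.zero_rpow hp3'.ne', mul_zero,
                neg_zero] at hL0
              refine hdwLeft one_lt_two hL0 ?_
              intro y hy1 hy2
              rcases hy2.lt_or_eq with hy | hy
              · exact hG4 y (not_lt.2 hy1.le) hy
              · rw [hy, hG5 2 (lt_irrefl _), show (2:ℝ) - 2 = 0 from by norm_num,
                  Real.zero_rpow hp2.ne']
            have hR : HasDerivWithinAt (sh2 p) 0 (Ici 2) 2 := by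
              refine hdwRight (hi := 3) (by norm_num) (hasDerivAt_const _ (0:ℝ)) ?_
              intro y hy1 hy2
              exact hG5 y (not_lt.2 hy1)
            rw [(glueDeriv hL hR).deriv, hG5 2 (lt_irrefl _), abs_zero]
            exact mul_nonneg hp2.le (Real.rpow_nonneg le_rfl _)
        · -- t > 2
          have he : sh2 p =ᶠ[nhds t] fun _ => (0:ℝ) :=
            eventuallyEq_of_mem (Ioi_mem_nhds h4) fun y hy => hG5 y (not_lt.2 hy.le)
          rw [he.deriv_eq, deriv_const, hG5 t (not_lt.2 h4.le), abs_zero]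
          exact mul_nonneg hp2.le (Real.rpow_nonneg le_rfl _)
end

section
/- Let H and H₁ be symmetric positive definite d×d matrices with λI ⪯ H ⪯ LI for some L ≥ λ > 0. If ‖H₁ - H‖₂ ≤ μ for some μ > 0 and P = H₁ + μI, then all eigenvalues of P^{-1}H are real and positive, the largest eigenvalue satisfies σ_max(P^{-1}H) ≤ 1, and the smallest eigenvalue satisfies σ_min(P^{-1}H) ≥ λ/(λ + 2μ). -/
open Matrix
open scoped ComplexOrder

lemma quad_bound {d : ℕ} {A : Matrix (Fin d) (Fin d) ℝ} {μ : ℝ}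
    (h : ‖Matrix.toEuclideanCLM (𝕜 := ℝ) A‖ ≤ μ) (x : Fin d → ℝ) :
    |x ⬝ᵥ A *ᵥ x| ≤ μ * (x ⬝ᵥ x) := by
  set T := Matrix.toEuclideanCLM (𝕜 := ℝ) A with hT
  set v : EuclideanSpace ℝ (Fin d) := (WithLp.equiv 2 (Fin d → ℝ)).symm x with hv
  have hTv : T v = (WithLp.equiv 2 (Fin d → ℝ)).symm (A *ᵥ x) :=
    Matrix.toEuclideanCLM_toLp A x
  have h1 : (inner ℝ v (T v) : ℝ) = x ⬝ᵥ A *ᵥ x := by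
    rw [hTv, hv, EuclideanSpace.inner_toLp_toLp]
    simp [dotProduct, mul_comm]
  have h2 : (inner ℝ v v : ℝ) = x ⬝ᵥ x := by
    rw [hv, EuclideanSpace.inner_toLp_toLp]
    simp [dotProduct]
  have h3 : |(inner ℝ v (T v) : ℝ)| ≤ ‖v‖ * ‖T v‖ := abs_real_inner_le_norm v (T v)
  have h4 : ‖T v‖ ≤ ‖T‖ * ‖v‖ := T.le_opNorm v
  have h5 : (inner ℝ v v : ℝ) = ‖v‖ * ‖v‖ := real_inner_self_eq_norm_mul_norm v
  have h6 : (0:ℝ) ≤ ‖v‖ := norm_nonneg v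
  have h7 : (0:ℝ) ≤ ‖T‖ := norm_nonneg T
  rw [← h1, ← h2, h5]
  nlinarith [h3, h4]

lemma psd_map {d : ℕ} {A : Matrix (Fin d) (Fin d) ℝ} (hA : A.PosSemidef) :
    (A.map Complex.ofReal).PosSemidef := by
  obtain ⟨m, w, hw⟩ := Matrix.posSemidef_iff_eq_sum_vecMulVec.mp hA
  refine Matrix.posSemidef_iff_eq_sum_vecMulVec.mpr ⟨m, fun i j => ((w i j : ℝ) : ℂ), ?_⟩
  subst hw
  ext j k
  simp [Matrix.sum_apply, Matrix.vecMulVec_apply]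

lemma spec_eigenvector {d : ℕ} (M : Matrix (Fin d) (Fin d) ℂ) (z : ℂ) (hz : z ∈ spectrum ℂ M) :
    ∃ v : Fin d → ℂ, v ≠ 0 ∧ M *ᵥ v = z • v := by
  rw [← AlgEquiv.spectrum_eq (Matrix.toLinAlgEquiv' (R := ℂ) (n := Fin d)),
    ← Module.End.hasEigenvalue_iff_mem_spectrum] at hz
  obtain ⟨v, hv⟩ := hz.exists_hasEigenvector
  refine ⟨v, hv.2, ?_⟩
  have h := hv.1
  rw [Module.End.mem_eigenspace_iff] at h
  rwa [Matrix.toLinAlgEquiv'_apply] at h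



/-- If `H, H₁` are symmetric positive definite with `λI ⪯ H ⪯ LI`, `L ≥ λ > 0`,
`‖H₁ - H‖₂ ≤ μ` (spectral norm) with `μ > 0`, and `P = H₁ + μI`, then all
eigenvalues of `P⁻¹H` are real and positive, with largest eigenvalue at most 1
and smallest at least `λ/(λ + 2μ)`. -/
theorem preconditioned_eigenvalue_bounds {d : ℕ} (lam L μ : ℝ)
    (hlam : 0 < lam) (hL : lam ≤ L) (hμ : 0 < μ)
    (H H₁ : Matrix (Fin d) (Fin d) ℝ) (hH : H.PosDef) (hH₁ : H₁.PosDef)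
    (hlow : (H - lam • (1 : Matrix (Fin d) (Fin d) ℝ)).PosSemidef)
    (hup : ((L • (1 : Matrix (Fin d) (Fin d) ℝ)) - H).PosSemidef)
    (hclose : ‖Matrix.toEuclideanCLM (𝕜 := ℝ) (H₁ - H)‖ ≤ μ) :
    ∀ z ∈ spectrum ℂ
        (((H₁ + μ • (1 : Matrix (Fin d) (Fin d) ℝ))⁻¹ * H).map Complex.ofReal),
      z.im = 0 ∧ 0 < z.re ∧ z.re ≤ 1 ∧ lam / (lam + 2 * μ) ≤ z.re := by
  intro z hz
  set P : Matrix (Fin d) (Fin d) ℝ := H₁ + μ • (1 : Matrix (Fin d) (Fin d) ℝ) with hPdef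
  have hsmul_herm : ∀ (c : ℝ) (A : Matrix (Fin d) (Fin d) ℝ), A.IsHermitian →
      (c • A).IsHermitian := by
    intro c A hA
    unfold Matrix.IsHermitian at *
    rw [Matrix.conjTranspose_smul, star_trivial, hA]
  have hone : (1 : Matrix (Fin d) (Fin d) ℝ).IsHermitian := Matrix.isHermitian_one
  -- P is positive definite
  have hP : P.PosDef := by
    refine Matrix.PosDef.of_dotProduct_mulVec_pos (hH₁.1.add (hsmul_herm μ 1 hone)) fun x hx => ?_
    simp only [star_trivial]
    have h1 := hH₁.dotProduct_mulVec_pos hx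
    have h2 : (0:ℝ) < x ⬝ᵥ x := by
      have := Matrix.dotProduct_star_self_pos_iff (v := x) |>.mpr hx
      simpa using this
    have : x ⬝ᵥ P *ᵥ x = x ⬝ᵥ H₁ *ᵥ x + μ * (x ⬝ᵥ x) := by
      simp [hPdef, Matrix.add_mulVec, Matrix.smul_mulVec, Matrix.one_mulVec,
        dotProduct_add, dotProduct_smul, smul_eq_mul]
    rw [this]
    have : (0:ℝ) < x ⬝ᵥ H₁ *ᵥ x := by simpa using h1
    nlinarith
  -- P - H is PSD
  have hPH : (P - H).PosSemidef := by
    refine Matrix.PosSemidef.of_dotProduct_mulVec_nonneg ((hH₁.1.add (hsmul_herm μ 1 hone)).sub hH.1) fun x => ?_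
    simp only [star_trivial]
    have hb := quad_bound hclose x
    have heq : x ⬝ᵥ (P - H) *ᵥ x = x ⬝ᵥ (H₁ - H) *ᵥ x + μ * (x ⬝ᵥ x) := by
      simp [hPdef, Matrix.sub_mulVec, Matrix.add_mulVec, Matrix.smul_mulVec,
        Matrix.one_mulVec, dotProduct_add, dotProduct_sub, dotProduct_smul, smul_eq_mul]
      ring
    have : (0:ℝ) ≤ x ⬝ᵥ (H₁ - H) *ᵥ x + μ * (x ⬝ᵥ x) := by
      have := abs_le.mp hb
      linarith [this.1]
    simpa [heq] using this
  -- Q := ((lam + 2μ)/lam) • H - P is PSD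
  have hQ : (((lam + 2*μ)/lam) • H - P).PosSemidef := by
    refine Matrix.PosSemidef.of_dotProduct_mulVec_nonneg ((hsmul_herm _ H hH.1).sub (hH₁.1.add (hsmul_herm μ 1 hone))) fun x => ?_
    simp only [star_trivial]
    have hb := abs_le.mp (quad_bound hclose x)
    have hlow2 := hlow.dotProduct_mulVec_nonneg x
    simp only [star_trivial] at hlow2
    have hlow3 : lam * (x ⬝ᵥ x) ≤ x ⬝ᵥ H *ᵥ x := by
      have : x ⬝ᵥ (H - lam • (1:Matrix (Fin d) (Fin d) ℝ)) *ᵥ x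
          = x ⬝ᵥ H *ᵥ x - lam * (x ⬝ᵥ x) := by
        simp [Matrix.sub_mulVec, Matrix.smul_mulVec, Matrix.one_mulVec,
          dotProduct_sub, dotProduct_smul, smul_eq_mul]
      rw [this] at hlow2
      simpa using by linarith [hlow2]
    have heq : x ⬝ᵥ (((lam + 2*μ)/lam) • H - P) *ᵥ x
        = ((lam + 2*μ)/lam) * (x ⬝ᵥ H *ᵥ x) - (x ⬝ᵥ H₁ *ᵥ x) - μ * (x ⬝ᵥ x) := by
      simp [hPdef, Matrix.sub_mulVec, Matrix.add_mulVec, Matrix.smul_mulVec,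
        Matrix.one_mulVec, dotProduct_sub, dotProduct_add, dotProduct_smul, smul_eq_mul]
      ring
    have hsplit : x ⬝ᵥ H₁ *ᵥ x = x ⬝ᵥ H *ᵥ x + x ⬝ᵥ (H₁ - H) *ᵥ x := by
      simp [Matrix.sub_mulVec, dotProduct_sub]
    have hk : ((lam + 2*μ)/lam) * lam = lam + 2*μ := by field_simp
    have hkpos : (0:ℝ) < (lam + 2*μ)/lam := by positivity
    have hmul := mul_le_mul_of_nonneg_left hlow3 (by positivity : (0:ℝ) ≤ 2*μ/lam)
    have hmul2 : 2*μ/lam * (lam * (x ⬝ᵥ x)) = 2*μ*(x ⬝ᵥ x) := by field_simp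
    rw [heq, hsplit]
    have h2 := hb.2
    have hfrac : (lam + 2*μ)/lam = 1 + 2*μ/lam := by field_simp
    rw [hfrac]
    nlinarith [hmul, hmul2, h2]
  -- move to ℂ
  set Hc : Matrix (Fin d) (Fin d) ℂ := H.map Complex.ofReal with hHc
  set Pc : Matrix (Fin d) (Fin d) ℂ := P.map Complex.ofReal with hPc
  obtain ⟨v, hv0, hMv⟩ := spec_eigenvector _ z hz
  have hPdet : IsUnit P.det := hP.det_pos.ne'.isUnit
  have hmapdet : ∀ A : Matrix (Fin d) (Fin d) ℝ,
      (A.map Complex.ofReal).det = (A.det : ℂ) := by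
    intro A
    rw [show A.map Complex.ofReal = Complex.ofRealHom.mapMatrix A from rfl]
    exact (RingHom.map_det _ _).symm
  have hPcdet : Pc.det ≠ 0 := by
    rw [hPc, hmapdet]
    simpa using hP.det_pos.ne'
  have hHcdet : Hc.det ≠ 0 := by
    rw [hHc, hmapdet]
    simpa using hH.det_pos.ne'
  have hmulPH : Pc * ((P⁻¹ * H).map Complex.ofReal) = Hc := by
    rw [hPc, hHc, show P.map Complex.ofReal * ((P⁻¹ * H).map Complex.ofReal)
      = (P * (P⁻¹ * H)).map Complex.ofReal from (Matrix.map_mul (f := Complex.ofRealHom)).symm,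
      ← Matrix.mul_assoc, Matrix.mul_nonsing_inv _ hPdet, Matrix.one_mul]
  have hHv : Hc *ᵥ v = z • (Pc *ᵥ v) := by
    rw [← hmulPH, ← Matrix.mulVec_mulVec, hMv, Matrix.mulVec_smul]
  set a : ℂ := star v ⬝ᵥ Hc *ᵥ v with ha
  set b : ℂ := star v ⬝ᵥ Pc *ᵥ v with hb
  have hab : a = z * b := by
    rw [ha, hb, hHv, dotProduct_smul, smul_eq_mul]
  have hHcpsd : Hc.PosSemidef := psd_map hH.posSemidef
  have hPcpsd : Pc.PosSemidef := psd_map hP.posSemidef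
  have hpos : ∀ (M : Matrix (Fin d) (Fin d) ℂ), M.PosSemidef → M.det ≠ 0 →
      0 < star v ⬝ᵥ M *ᵥ v := by
    intro M hM hMdet
    refine lt_of_le_of_ne (hM.dotProduct_mulVec_nonneg v) fun h0 => hv0 ?_
    have := (hM.dotProduct_mulVec_zero_iff v).mp h0.symm
    have hinj : Function.Injective (M.mulVec) :=
      Matrix.mulVec_injective_iff_isUnit.mpr ((Matrix.isUnit_iff_isUnit_det _).mpr hMdet.isUnit)
    have : M *ᵥ v = M *ᵥ 0 := by simpa using this
    exact hinj this
  have hapos : 0 < a := hpos Hc hHcpsd hHcdet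
  have hbpos : 0 < b := hpos Pc hPcpsd hPcdet
  have haim : a.im = 0 := ((Complex.lt_def.mp hapos).2).symm
  have hbim : b.im = 0 := ((Complex.lt_def.mp hbpos).2).symm
  have hare : 0 < a.re := (Complex.lt_def.mp hapos).1
  have hbre : 0 < b.re := (Complex.lt_def.mp hbpos).1
  have haC : a = ((a.re : ℝ) : ℂ) := Complex.ext rfl (by simp [haim])
  have hbC : b = ((b.re : ℝ) : ℂ) := Complex.ext rfl (by simp [hbim])
  have hzeq : z = ((a.re / b.re : ℝ) : ℂ) := by
    have hbne : b ≠ 0 := hbpos.ne'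
    have hzdiv : z = a / b := (eq_div_iff hbne).mpr hab.symm
    rw [hzdiv, haC, hbC, ← Complex.ofReal_div]
    simp
  -- inequality 1 : a.re ≤ b.re
  have hPHc : (Pc - Hc).PosSemidef := by
    have := psd_map hPH
    have heq : (P - H).map Complex.ofReal = Pc - Hc := by
      ext i j
      simp [hPc, hHc, Matrix.map_apply, Matrix.sub_apply]
    rwa [heq] at this
  have hineq1 : a.re ≤ b.re := by
    have h0 := hPHc.dotProduct_mulVec_nonneg v
    have : star v ⬝ᵥ (Pc - Hc) *ᵥ v = b - a := by
      rw [hb, ha, Matrix.sub_mulVec, dotProduct_sub]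
    rw [this] at h0
    have := (Complex.le_def.mp h0).1
    simpa using this
  -- inequality 2 : b.re ≤ ((lam+2μ)/lam) * a.re
  have hQc : ((((lam + 2*μ)/lam : ℝ) : ℂ) • Hc - Pc).PosSemidef := by
    have := psd_map hQ
    have heq : (((lam + 2*μ)/lam) • H - P).map Complex.ofReal
        = (((lam + 2*μ)/lam : ℝ) : ℂ) • Hc - Pc := by
      ext i j
      simp [hPc, hHc, Matrix.map_apply, Matrix.sub_apply, Matrix.smul_apply, smul_eq_mul]
    rwa [heq] at this
  have hineq2 : b.re ≤ ((lam + 2*μ)/lam) * a.re := by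
    have h0 := hQc.dotProduct_mulVec_nonneg v
    have heq2 : star v ⬝ᵥ ((((lam + 2*μ)/lam : ℝ) : ℂ) • Hc - Pc) *ᵥ v
        = (((lam + 2*μ)/lam : ℝ) : ℂ) * a - b := by
      rw [hb, ha, Matrix.sub_mulVec, dotProduct_sub, Matrix.smul_mulVec,
        dotProduct_smul, smul_eq_mul]
    rw [heq2] at h0
    have h1 := (Complex.le_def.mp h0).1
    simp [Complex.sub_re, Complex.mul_re, Complex.ofReal_re, Complex.ofReal_im, haim] at h1
    linarith
  -- conclude
  have him : z.im = 0 := by rw [hzeq]; simp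
  have hre : z.re = a.re / b.re := by rw [hzeq]; simp
  refine ⟨him, ?_, ?_, ?_⟩
  · rw [hre]; positivity
  · rw [hre]; exact (div_le_one hbre).mpr hineq1
  · rw [hre, div_le_div_iff₀ (by positivity) hbre]
    have hk : ((lam + 2*μ)/lam) * lam = lam + 2*μ := by field_simp
    nlinarith [mul_le_mul_of_nonneg_left hineq2 hlam.le]
end

section
/- Define ω(t) = t - log(1+t) for t ≥ 0 and ω_*(t) = -t - log(1-t) for 0 ≤ t < 1. Then ω_*(t) ≤ 2ω(t) for all t ∈ [0, 1/6]. -/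
/-- ω_*(t) ≤ 2 ω(t) for t ∈ [0, 1/6], where ω(t) = t - log(1+t) and
ω_*(t) = -t - log(1-t). -/
theorem omega_star_le_two_omega :
    ∀ t ∈ Set.Icc (0:ℝ) (1/6),
      (-t - Real.log (1 - t)) ≤ 2 * (t - Real.log (1 + t)) := by
  rintro t ⟨ht0, ht1⟩
  have h1 : (0:ℝ) < 1 + t := by linarith
  have h2 : (0:ℝ) < 1 - t := by linarith
  have hexp := Real.sum_le_exp_of_nonneg (x := 3 * t) (by linarith) 4
  have hsum : ∑ i ∈ Finset.range 4, (3*t) ^ i / (i.factorial : ℝ) =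
      1 + 3*t + 9*t^2/2 + 27*t^3/6 := by
    simp [Finset.sum_range_succ, Nat.factorial]
    ring
  rw [hsum] at hexp
  have hkey : (1 + t)^2 ≤ (1 - t) * Real.exp (3 * t) := by
    have : (1 + t)^2 ≤ (1 - t) * (1 + 3*t + 9*t^2/2 + 27*t^3/6) := by
      have h9 : 0 ≤ 1 - 9*t^2 := by nlinarith
      nlinarith [mul_nonneg (sq_nonneg t) h9]
    calc (1 + t)^2 ≤ (1 - t) * (1 + 3*t + 9*t^2/2 + 27*t^3/6) := this
      _ ≤ (1 - t) * Real.exp (3 * t) := by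
          exact mul_le_mul_of_nonneg_left hexp h2.le
  have hlog : Real.log ((1 + t)^2) ≤ Real.log ((1 - t) * Real.exp (3 * t)) :=
    Real.log_le_log (by positivity) hkey
  rw [Real.log_pow, Real.log_mul h2.ne' (Real.exp_ne_zero _), Real.log_exp] at hlog
  push_cast at hlog
  linarith
end

section
/- Define ω(t) = t - log(1+t) and ω_*(t) = -t - log(1-t). Then ω_*(t) - ω(t) ≤ 0.26·ω(t) for all t ∈ [0, 1/6]. -/
open Real Set

lemma aux_log_upper (t : ℝ) (ht : t ∈ Set.Icc (0:ℝ) (1/6)) :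
    Real.log (1 + t) ≤ t - t^2/2 + t^3/3 - t^4/4 + t^5/5 := by
  obtain ⟨h0, h6⟩ := ht
  set f : ℝ → ℝ := fun t => t - t^2/2 + t^3/3 - t^4/4 + t^5/5 - Real.log (1+t) with hf
  have hderiv : ∀ x ∈ Set.Icc (0:ℝ) (1/6), HasDerivAt f (x^5/(1+x)) x := by
    intro x hx
    have hx1 : (1:ℝ) + x ≠ 0 := by nlinarith [hx.1]
    have h1 : HasDerivAt (fun t : ℝ => Real.log (1+t)) (1/(1+x)) x := by
      have := (Real.hasDerivAt_log hx1).comp x ((hasDerivAt_id x).const_add 1)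
      simpa [one_div, Function.comp_def] using this
    have h2 : HasDerivAt (fun t : ℝ => t - t^2/2 + t^3/3 - t^4/4 + t^5/5)
        (1 - x + x^2 - x^3 + x^4) x := by
      have := ((((hasDerivAt_id x).sub ((hasDerivAt_pow 2 x).div_const 2)).add
        ((hasDerivAt_pow 3 x).div_const 3)).sub ((hasDerivAt_pow 4 x).div_const 4)).add
        ((hasDerivAt_pow 5 x).div_const 5)
      refine this.congr_deriv ?_
      ring
    have := h2.sub h1
    refine this.congr_deriv ?_
    field_simp
    ring
  have mono : MonotoneOn f (Set.Icc 0 (1/6)) := by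
    apply monotoneOn_of_deriv_nonneg (convex_Icc _ _)
    · exact fun x hx => (hderiv x hx).continuousAt.continuousWithinAt
    · intro x hx
      rw [interior_Icc] at hx
      exact (hderiv x ⟨le_of_lt hx.1, le_of_lt hx.2⟩).differentiableAt.differentiableWithinAt
    · intro x hx
      rw [interior_Icc] at hx
      rw [(hderiv x ⟨le_of_lt hx.1, le_of_lt hx.2⟩).deriv]
      apply div_nonneg (pow_nonneg hx.1.le 5) (by nlinarith [hx.1])
  have h00 : f 0 = 0 := by simp [hf]
  have := mono (Set.mem_Icc.mpr ⟨le_refl 0, by norm_num⟩) (Set.mem_Icc.mpr ⟨h0, h6⟩) h0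
  rw [h00] at this
  simp only [hf] at this
  linarith

lemma aux_log_lower (t : ℝ) (ht : t ∈ Set.Icc (0:ℝ) (1/6)) :
    -Real.log (1 - t) ≤ t + t^2/2 + t^3/3 + t^4/4 + (6/25) * t^5 := by
  obtain ⟨h0, h6⟩ := ht
  set f : ℝ → ℝ := fun t => t + t^2/2 + t^3/3 + t^4/4 + (6/25)*t^5 + Real.log (1-t) with hf
  have hderiv : ∀ x ∈ Set.Icc (0:ℝ) (1/6), HasDerivAt f (x^4*(1-6*x)/(5*(1-x))) x := by
    intro x hx
    have hx1 : (1:ℝ) - x ≠ 0 := by nlinarith [hx.2]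
    have h1 : HasDerivAt (fun t : ℝ => Real.log (1-t)) (-(1/(1-x))) x := by
      have := (Real.hasDerivAt_log hx1).comp x ((hasDerivAt_id x).const_sub 1)
      simpa [one_div, Function.comp_def] using this
    have h2 : HasDerivAt (fun t : ℝ => t + t^2/2 + t^3/3 + t^4/4 + (6/25)*t^5)
        (1 + x + x^2 + x^3 + (6/5)*x^4) x := by
      have := ((((hasDerivAt_id x).add ((hasDerivAt_pow 2 x).div_const 2)).add
        ((hasDerivAt_pow 3 x).div_const 3)).add ((hasDerivAt_pow 4 x).div_const 4)).add
        (((hasDerivAt_pow 5 x).const_mul (6/25 : ℝ)))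
      refine this.congr_deriv ?_
      ring
    have := h2.add h1
    refine this.congr_deriv ?_
    field_simp
    ring
  have mono : MonotoneOn f (Set.Icc 0 (1/6)) := by
    apply monotoneOn_of_deriv_nonneg (convex_Icc _ _)
    · exact fun x hx => (hderiv x hx).continuousAt.continuousWithinAt
    · intro x hx
      rw [interior_Icc] at hx
      exact (hderiv x ⟨le_of_lt hx.1, le_of_lt hx.2⟩).differentiableAt.differentiableWithinAt
    · intro x hx
      rw [interior_Icc] at hx
      rw [(hderiv x ⟨le_of_lt hx.1, le_of_lt hx.2⟩).deriv]
      apply div_nonneg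
      · apply mul_nonneg (pow_nonneg hx.1.le 4)
        nlinarith [hx.2]
      · nlinarith [hx.2]
  have h00 : f 0 = 0 := by simp [hf]
  have := mono (Set.mem_Icc.mpr ⟨le_refl 0, by norm_num⟩) (Set.mem_Icc.mpr ⟨h0, h6⟩) h0
  rw [h00] at this
  simp only [hf] at this
  linarith

/-- ω_*(t) - ω(t) ≤ 0.26 ω(t) for t ∈ [0, 1/6]. -/
theorem omega_star_sub_omega_le :
    ∀ t ∈ Set.Icc (0:ℝ) (1/6),
      (-t - Real.log (1 - t)) - (t - Real.log (1 + t))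
        ≤ 0.26 * (t - Real.log (1 + t)) := by
  intro t ht
  have hA := aux_log_upper t ht
  have hB := aux_log_lower t ht
  obtain ⟨h0, h6⟩ := ht
  norm_num
  nlinarith [mul_nonneg (mul_nonneg h0 h0) h0,
    mul_nonneg (mul_nonneg (mul_nonneg h0 h0) h0) h0,
    mul_nonneg (mul_nonneg h0 h0) (sub_nonneg.mpr h6),
    mul_nonneg (mul_nonneg (mul_nonneg h0 h0) h0) (sub_nonneg.mpr h6),
    mul_nonneg (mul_nonneg (mul_nonneg (mul_nonneg h0 h0) h0) h0) (sub_nonneg.mpr h6)]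
end

section
/- The function h(t) = ω_*(t) - ω(t) = -2t - log(1-t) + log(1+t) satisfies h(t) ≤ (128/189)t³ for all t ∈ [0, 1/8], and ω(t) = t - log(1+t) satisfies ω(t) ≥ (4/9)t² for all t ∈ [0, 1/8]. Consequently ω_*(t) - ω(t) ≤ (√6 - 1/10)·ω(t)^{3/2} for t ∈ [0, 1/8]. -/
private lemma cube_bound : ∀ t ∈ Set.Icc (0:ℝ) (1/8),
    (-2 * t - Real.log (1 - t) + Real.log (1 + t)) ≤ (128/189) * t ^ 3 := by
  set f : ℝ → ℝ := fun t => (128/189)*t^3 + 2*t + Real.log (1-t) - Real.log (1+t) with hf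
  have hder : ∀ t ∈ Set.Icc (0:ℝ) (1/8),
      HasDerivAt f ((128/189)*(3*t^2) + 2 + (-(1-t)⁻¹) - (1+t)⁻¹) t := by
    intro t ht
    obtain ⟨ht0, ht1⟩ := ht
    have h1t : (0:ℝ) < 1 - t := by linarith
    have h2t : (0:ℝ) < 1 + t := by linarith
    have d1 : HasDerivAt (fun t:ℝ => (128/189)*t^3) ((128/189)*(3*t^2)) t := by
      simpa using (hasDerivAt_pow 3 t).const_mul (128/189:ℝ)
    have d2 : HasDerivAt (fun t:ℝ => 2*t) 2 t := by
      simpa using (hasDerivAt_id t).const_mul (2:ℝ)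
    have d3 : HasDerivAt (fun t:ℝ => Real.log (1-t)) (-(1-t)⁻¹) t := by
      have h : HasDerivAt (fun t:ℝ => 1-t) (-1) t := (hasDerivAt_id t).const_sub 1
      simpa [Function.comp_def] using (Real.hasDerivAt_log h1t.ne').comp t h
    have d4 : HasDerivAt (fun t:ℝ => Real.log (1+t)) ((1+t)⁻¹) t := by
      have h : HasDerivAt (fun t:ℝ => 1+t) 1 t := (hasDerivAt_id t).const_add 1
      simpa [Function.comp_def] using (Real.hasDerivAt_log h2t.ne').comp t h
    exact ((d1.add d2).add d3).sub d4
  have hmono : MonotoneOn f (Set.Icc (0:ℝ) (1/8)) := by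
    apply monotoneOn_of_deriv_nonneg (convex_Icc _ _)
    · exact fun t ht => ((hder t ht).differentiableAt).continuousAt.continuousWithinAt
    · intro t ht
      rw [interior_Icc] at ht
      exact ((hder t (Set.mem_Icc_of_Ioo ht)).differentiableAt).differentiableWithinAt
    · intro t ht
      rw [interior_Icc] at ht
      rw [(hder t (Set.mem_Icc_of_Ioo ht)).deriv]
      obtain ⟨ht0, ht1⟩ := ht
      have h1t : (0:ℝ) < 1 - t := by linarith
      have h2t : (0:ℝ) < 1 + t := by linarith
      have hsq : t^2 ≤ 1/64 := by nlinarith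
      have hpos : (0:ℝ) < 1 - t^2 := by nlinarith
      have e : (1-t)⁻¹ + (1+t)⁻¹ = 2/(1-t^2) := by
        field_simp [h1t.ne', h2t.ne', hpos.ne']
        ring
      have key : 2/(1-t^2) ≤ (128/189)*(3*t^2) + 2 := by
        rw [div_le_iff₀ hpos]
        nlinarith
      linarith [e, key]
  have hzero : f 0 = 0 := by simp [hf]
  intro t ht
  have := hmono (Set.left_mem_Icc.mpr (by norm_num)) ht ht.1
  rw [hzero] at this
  simp only [hf] at this
  linarith

private lemma omega_lower : ∀ t ∈ Set.Icc (0:ℝ) (1/8),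
    (4/9) * t ^ 2 ≤ (t - Real.log (1 + t)) := by
  set g : ℝ → ℝ := fun t => t - Real.log (1+t) - (4/9)*t^2 with hg
  have hder : ∀ t ∈ Set.Icc (0:ℝ) (1/8),
      HasDerivAt g (1 - (1+t)⁻¹ - (4/9)*(2*t)) t := by
    intro t ht
    obtain ⟨ht0, ht1⟩ := ht
    have h2t : (0:ℝ) < 1 + t := by linarith
    have d1 : HasDerivAt (fun t:ℝ => t) 1 t := hasDerivAt_id t
    have d4 : HasDerivAt (fun t:ℝ => Real.log (1+t)) ((1+t)⁻¹) t := by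
      have h : HasDerivAt (fun t:ℝ => 1+t) 1 t := (hasDerivAt_id t).const_add 1
      simpa [Function.comp_def] using (Real.hasDerivAt_log h2t.ne').comp t h
    have d5 : HasDerivAt (fun t:ℝ => (4/9)*t^2) ((4/9)*(2*t)) t := by
      simpa using (hasDerivAt_pow 2 t).const_mul (4/9:ℝ)
    exact (d1.sub d4).sub d5
  have hmono : MonotoneOn g (Set.Icc (0:ℝ) (1/8)) := by
    apply monotoneOn_of_deriv_nonneg (convex_Icc _ _)
    · exact fun t ht => ((hder t ht).differentiableAt).continuousAt.continuousWithinAt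
    · intro t ht
      rw [interior_Icc] at ht
      exact ((hder t (Set.mem_Icc_of_Ioo ht)).differentiableAt).differentiableWithinAt
    · intro t ht
      rw [interior_Icc] at ht
      rw [(hder t (Set.mem_Icc_of_Ioo ht)).deriv]
      obtain ⟨ht0, ht1⟩ := ht
      have h2t : (0:ℝ) < 1 + t := by linarith
      have key : (1+t)⁻¹ ≤ 1 - (8/9)*t := by
        rw [inv_eq_one_div, div_le_iff₀ h2t]
        nlinarith
      linarith [key]
  have hzero : g 0 = 0 := by simp [hg]
  intro t ht
  have := hmono (Set.left_mem_Icc.mpr (by norm_num)) ht ht.1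
  rw [hzero] at this
  simp only [hg] at this
  linarith

/-- On [0, 1/8]: h(t) = ω_*(t) - ω(t) ≤ (128/189) t³, ω(t) ≥ (4/9) t², and
consequently ω_*(t) - ω(t) ≤ (√6 - 1/10) ω(t)^{3/2}. -/
theorem omega_star_sub_omega_bounds :
    ∀ t ∈ Set.Icc (0:ℝ) (1/8),
      (-2 * t - Real.log (1 - t) + Real.log (1 + t)) ≤ (128/189) * t ^ 3 ∧
      (4/9) * t ^ 2 ≤ (t - Real.log (1 + t)) ∧
      (-t - Real.log (1 - t)) - (t - Real.log (1 + t))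
        ≤ (Real.sqrt 6 - 1/10) * (t - Real.log (1 + t)) ^ ((3:ℝ)/2) := by
  intro t ht
  obtain ⟨ht0, ht1⟩ := ht
  have h1 := cube_bound t ⟨ht0, ht1⟩
  have h2 := omega_lower t ⟨ht0, ht1⟩
  refine ⟨h1, h2, ?_⟩
  have hsqrt : Real.sqrt 6 ≥ 167/70 := by
    rw [ge_iff_le, show (167/70:ℝ) = Real.sqrt ((167/70)^2) by
      rw [Real.sqrt_sq (by norm_num)]]
    exact Real.sqrt_le_sqrt (by norm_num)
  have hω0 : 0 ≤ t - Real.log (1+t) := by nlinarith [h2, sq_nonneg t]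
  -- (4/9)t^2 = ((2/3)t)^2, and ((2/3)t)^3 = (8/27) t^3
  have hpow : ((4/9) * t^2 : ℝ) ^ ((3:ℝ)/2) = (8/27) * t^3 := by
    have e : ((4/9) * t^2 : ℝ) = ((2/3)*t)^2 := by ring
    rw [e, ← Real.rpow_natCast ((2/3)*t) 2, ← Real.rpow_mul (by positivity)]
    norm_num
    ring
  have hmono : ((4/9) * t^2 : ℝ) ^ ((3:ℝ)/2) ≤ (t - Real.log (1+t)) ^ ((3:ℝ)/2) :=
    Real.rpow_le_rpow (by positivity) h2 (by norm_num)
  rw [hpow] at hmono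
  have hc : (0:ℝ) ≤ Real.sqrt 6 - 1/10 := by linarith
  have : (128/189) * t^3 ≤ (Real.sqrt 6 - 1/10) * ((8/27) * t^3) := by
    have h3 : (0:ℝ) ≤ t^3 := by positivity
    nlinarith [hsqrt, h3]
  calc (-t - Real.log (1 - t)) - (t - Real.log (1 + t))
      = -2 * t - Real.log (1 - t) + Real.log (1 + t) := by ring
    _ ≤ (128/189) * t^3 := h1
    _ ≤ (Real.sqrt 6 - 1/10) * ((8/27) * t^3) := this
    _ ≤ (Real.sqrt 6 - 1/10) * (t - Real.log (1+t)) ^ ((3:ℝ)/2) := by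
        exact mul_le_mul_of_nonneg_left hmono hc
end

section
/- Let r: ℝ^d → ℝ be ρ-strongly convex with minimizer ŵ = argmin r, and let r^{(k)}: ℝ^d → ℝ be ρ-strongly convex with minimizer ŵ^{(k)}. Suppose r(w) - r^{(k)}(w) = (1/n)(φ(w, z) - φ(w, z̃)) for all w, where for all points u in a set containing ŵ and ŵ^{(k)} the functions w ↦ φ(w,z) and w ↦ φ(w,z̃) are G-Lipschitz. Then ‖ŵ^{(k)} - ŵ‖₂ ≤ 2G/(ρn), and |φ(ŵ^{(k)}, z') - φ(ŵ, z')| ≤ 2G²/(ρn) for any z' such that φ(·, z') is G-Lipschitz. -/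
lemma strong_min_aux {E : Type*} [NormedAddCommGroup E] [InnerProductSpace ℝ E]
    {ρ : ℝ} {f : E → ℝ} (hf : StrongConvexOn Set.univ ρ f) {x₀ : E}
    (hx : IsMinOn f Set.univ x₀) (y : E) :
    f x₀ + ρ / 2 * ‖y - x₀‖ ^ 2 ≤ f y := by
  set C := ρ / 2 * ‖y - x₀‖ ^ 2 with hC
  have key : ∀ t : ℝ, 0 < t → t ≤ 1 → f x₀ + (1 - t) * C ≤ f y := by
    intro t ht ht1
    have h := hf.2 (Set.mem_univ y) (Set.mem_univ x₀) (le_of_lt ht) (by linarith : (0:ℝ) ≤ 1 - t)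
      (by ring)
    have hmin := hx (Set.mem_univ (t • y + (1 - t) • x₀))
    simp only [Set.mem_setOf_eq, smul_eq_mul] at h hmin
    have h2 : f x₀ ≤ t * f y + (1 - t) * f x₀ - t * (1 - t) * C := le_trans hmin h
    nlinarith
  refine le_of_forall_pos_le_add fun ε hε => ?_
  set t := min 1 (ε / (|C| + 1)) with htdef
  have habs : 0 ≤ |C| := abs_nonneg C
  have ht : 0 < t := lt_min one_pos (by positivity)
  have ht1 : t ≤ 1 := min_le_left _ _
  have h := key t ht ht1
  have htC : t * C ≤ ε := by
    calc t * C ≤ t * |C| := by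
          have := le_abs_self C
          nlinarith
      _ ≤ (ε / (|C| + 1)) * |C| := by
          have := min_le_right 1 (ε / (|C| + 1))
          nlinarith
      _ ≤ ε := by
          rw [div_mul_eq_mul_div, div_le_iff₀ (by positivity)]
          nlinarith
  nlinarith

/-- Stability of regularized ERM: if `r` and `r^{(k)}` are `ρ`-strongly convex
with respective minimizers `wh` and `whᵏ`, their difference is
`(1/n)(φ(·,z) - φ(·,z̃))`, and the loss functions are `G`-Lipschitz on a set `S`
containing both minimizers, then `‖whᵏ - wh‖ ≤ 2G/(ρn)`, and
`|φ(whᵏ, z') - φ(wh, z')| ≤ 2G²/(ρn)` for any loss `φ(·, z')` that is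
`G`-Lipschitz on `S`. -/
theorem erm_stability {d : ℕ} (ρ G : ℝ) (hρ : 0 < ρ) (hG : 0 ≤ G) (n : ℕ) (hn : 0 < n)
    (r rk : EuclideanSpace ℝ (Fin d) → ℝ)
    (hr : StrongConvexOn Set.univ ρ r) (hrk : StrongConvexOn Set.univ ρ rk)
    (wh whk : EuclideanSpace ℝ (Fin d))
    (hwh : IsMinOn r Set.univ wh) (hwhk : IsMinOn rk Set.univ whk)
    (φz φzt : EuclideanSpace ℝ (Fin d) → ℝ)
    (hdiff : ∀ w, r w - rk w = (1 / (n:ℝ)) * (φz w - φzt w))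
    (S : Set (EuclideanSpace ℝ (Fin d))) (hwhS : wh ∈ S) (hwhkS : whk ∈ S)
    (hφz : LipschitzOnWith (Real.toNNReal G) φz S)
    (hφzt : LipschitzOnWith (Real.toNNReal G) φzt S) :
    ‖whk - wh‖ ≤ 2 * G / (ρ * n) ∧
    ∀ φ' : EuclideanSpace ℝ (Fin d) → ℝ,
      LipschitzOnWith (Real.toNNReal G) φ' S →
        |φ' whk - φ' wh| ≤ 2 * G ^ 2 / (ρ * n) := by
  set D := ‖whk - wh‖ with hD
  have hD0 : 0 ≤ D := norm_nonneg _
  have hn' : (0:ℝ) < n := by exact_mod_cast hn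
  have hGcoe : ((Real.toNNReal G : NNReal) : ℝ) = G := Real.coe_toNNReal G hG
  have lip : ∀ φ' : EuclideanSpace ℝ (Fin d) → ℝ,
      LipschitzOnWith (Real.toNNReal G) φ' S → |φ' whk - φ' wh| ≤ G * D := by
    intro φ' hφ'
    have := hφ'.dist_le_mul whk hwhkS wh hwhS
    rwa [Real.dist_eq, dist_eq_norm, hGcoe] at this
  have h1 := strong_min_aux hr hwh whk
  have h2 := strong_min_aux hrk hwhk wh
  rw [norm_sub_rev] at h2
  have hd1 := hdiff whk
  have hd2 := hdiff wh
  have l1 := lip φz hφz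
  have l2 := lip φzt hφzt
  have key : ρ * D ^ 2 ≤ (2 * G / n) * D := by
    have habs1 : φz whk - φz wh ≤ G * D := (abs_le.mp l1).2
    have habs2 : -(G * D) ≤ φzt whk - φzt wh := (abs_le.mp l2).1
    have : ρ * D ^ 2 ≤ (1 / (n:ℝ)) * ((φz whk - φzt whk) - (φz wh - φzt wh)) := by
      nlinarith
    calc ρ * D ^ 2 ≤ (1 / (n:ℝ)) * ((φz whk - φzt whk) - (φz wh - φzt wh)) := this
      _ ≤ (1 / (n:ℝ)) * (2 * G * D) := by
          apply mul_le_mul_of_nonneg_left _ (by positivity)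
          nlinarith
      _ = (2 * G / n) * D := by ring
  have hDle : D ≤ 2 * G / (ρ * n) := by
    rcases eq_or_lt_of_le hD0 with h | h
    · rw [← h]; positivity
    · rw [le_div_iff₀ (by positivity)]
      have hρD : ρ * D ≤ 2 * G / n := le_of_mul_le_mul_right (by nlinarith [key]) h
      have h3 := mul_le_mul_of_nonneg_right hρD hn'.le
      have h4 : (2 * G / n) * n = 2 * G := by field_simp
      nlinarith
  refine ⟨hDle, fun φ' hφ' => ?_⟩
  calc |φ' whk - φ' wh| ≤ G * D := lip φ' hφ'
    _ ≤ G * (2 * G / (ρ * n)) := by nlinarith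
    _ = 2 * G ^ 2 / (ρ * n) := by ring
end
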